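/- arXiv:1908.05896 — 9 statements merged into one kernel-verified Lean document; each statement's English description precedes it below -/
import Mathlib

section
/- For every fixed real number t with 0 < t < 1, the function τ : (0, ∞) → (0, ∞) defined by τ(α) = α t^(α−1) / (1 − t^α) is convex on (0, ∞). -/
open Real Set Filter

private lemma exp_neg_deriv (x : ℝ) :
    HasDerivAt (fun y : ℝ => Real.exp (-y)) (-Real.exp (-x)) x := by
  simpa [Function.comp_def] using (Real.hasDerivAt_exp (-x)).comp x (hasDerivAt_neg x)

private lemma aux_key {x : ℝ} (hx : 0 ≤ x) :
    2 * (1 - Real.exp (-x)) ≤ x * (1 + Real.exp (-x)) := by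
  set h : ℝ → ℝ := fun y => y * (1 + Real.exp (-y)) - 2 * (1 - Real.exp (-y)) with hh
  have hd : ∀ y : ℝ, HasDerivAt h (1 - Real.exp (-y) - y * Real.exp (-y)) y := by
    intro y
    have h1 := (hasDerivAt_id y).mul ((hasDerivAt_const y 1).add (exp_neg_deriv y))
    have h2 : HasDerivAt (fun z : ℝ => 2 * (1 - Real.exp (-z)))
        (2 * (0 - -Real.exp (-y))) y :=
      ((hasDerivAt_const y 1).sub (exp_neg_deriv y)).const_mul 2
    have := h1.sub h2
    refine this.congr_deriv ?_
    simp only [id_eq, Pi.add_apply]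
    ring
  have hmono : MonotoneOn h (Set.Ici 0) := by
    apply monotoneOn_of_deriv_nonneg (convex_Ici 0)
      (fun y _ => ((hd y).differentiableAt).continuousAt.continuousWithinAt)
      (fun y _ => ((hd y).differentiableAt).differentiableWithinAt)
    intro y hy
    rw [interior_Ici] at hy
    rw [(hd y).deriv]
    have hy0 : 0 < y := hy
    have key : Real.exp (-y) * (1 + y) ≤ Real.exp (-y) * Real.exp y :=
      mul_le_mul_of_nonneg_left (by linarith [Real.add_one_le_exp y]) (Real.exp_pos _).le
    rw [← Real.exp_add] at key
    simp only [neg_add_cancel, Real.exp_zero] at key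
    nlinarith [Real.exp_pos (-y)]
  have h0 : h 0 = 0 := by simp [hh]
  have := hmono (Set.self_mem_Ici) hx hx
  rw [h0] at this
  simp only [hh] at this
  linarith

private lemma g_convex {L : ℝ} (hL : L < 0) :
    ConvexOn ℝ (Set.Ioi (0 : ℝ))
      (fun α : ℝ => α * Real.exp (α * L) / (1 - Real.exp (α * L))) := by
  set u : ℝ → ℝ := fun α => Real.exp (α * L) with huu
  set g : ℝ → ℝ := fun α => α * u α / (1 - u α) with hg
  set g₁ : ℝ → ℝ := fun α => u α / (1 - u α) + α * L * u α / (1 - u α) ^ 2 with hg₁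
  set g₂ : ℝ → ℝ := fun α =>
    2 * L * u α / (1 - u α) ^ 2 + α * L ^ 2 * u α * (1 + u α) / (1 - u α) ^ 3 with hg₂
  have hupos : ∀ α : ℝ, 0 < u α := fun α => Real.exp_pos _
  have hult : ∀ α : ℝ, 0 < α → u α < 1 := by
    intro α hα
    have : α * L < 0 := mul_neg_of_pos_of_neg hα hL
    simpa [huu] using Real.exp_lt_one_iff.mpr this
  have hud : ∀ α : ℝ, HasDerivAt u (L * u α) α := by
    intro α
    have := (Real.hasDerivAt_exp (α * L)).comp α ((hasDerivAt_id α).mul_const L)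
    simpa [huu, mul_comm, Function.comp_def] using this
  have hden : ∀ α : ℝ, 0 < α → (1 : ℝ) - u α ≠ 0 := by
    intro α hα
    have := hult α hα
    linarith
  have hdd : ∀ α : ℝ, HasDerivAt (fun y => 1 - u y) (-(L * u α)) α := by
    intro α
    simpa [Pi.sub_def] using (hasDerivAt_const α (1 : ℝ)).sub (hud α)
  have hg' : ∀ α ∈ Set.Ioi (0 : ℝ), HasDerivAt g (g₁ α) α := by
    intro α hα
    have hne := hden α hα
    have h1 : HasDerivAt (fun y => y * u y) (1 * u α + α * (L * u α)) α :=
      (hasDerivAt_id α).mul (hud α)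
    have := h1.div (hdd α) hne
    refine this.congr_deriv ?_
    simp only [hg₁]
    field_simp [hg₁]
    ring
  have hg₁' : ∀ α ∈ Set.Ioi (0 : ℝ), HasDerivAt g₁ (g₂ α) α := by
    intro α hα
    have hne := hden α hα
    have hne2 : ((1 : ℝ) - u α) ^ 2 ≠ 0 := pow_ne_zero _ hne
    have hA : HasDerivAt (fun y => u y / (1 - u y))
        ((L * u α * (1 - u α) - u α * (-(L * u α))) / (1 - u α) ^ 2) α :=
      (hud α).div (hdd α) hne
    have hN : HasDerivAt (fun y => y * L * u y)
        (L * u α + α * L * (L * u α)) α := by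
      have := ((hasDerivAt_id α).mul_const L).mul (hud α)
      refine this.congr_deriv ?_
      simp only [id_eq, one_mul]
    have hD : HasDerivAt (fun y => (1 - u y) ^ 2)
        ((2 : ℕ) * (1 - u α) ^ 1 * (-(L * u α))) α := (hdd α).pow 2
    have hB := hN.div hD hne2
    have := hA.add hB
    refine this.congr_deriv ?_
    simp only [hg₂, pow_one, Nat.cast_ofNat]
    field_simp
    ring
  have hg₂nonneg : ∀ α ∈ Set.Ioi (0 : ℝ), 0 ≤ g₂ α := by
    intro α hα
    have hα0 : (0 : ℝ) < α := hα
    have hu0 := hupos α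
    have hu1 := hult α hα0
    have hxL : 0 ≤ -(α * L) := by nlinarith
    have hkey := aux_key hxL
    rw [neg_neg] at hkey
    have huα : u α = Real.exp (α * L) := rfl
    rw [← huα] at hkey
    -- hkey : 2 * (1 - u α) ≤ -(α * L) * (1 + u α)
    have hfac : g₂ α = (L * u α / (1 - u α) ^ 3) * (2 * (1 - u α) + α * L * (1 + u α)) := by
      have hne : (1 : ℝ) - u α ≠ 0 := by linarith
      simp only [hg₂]
      field_simp [hg₂]
    rw [hfac]
    have h1 : L * u α / (1 - u α) ^ 3 ≤ 0 := by
      apply div_nonpos_of_nonpos_of_nonneg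
      · nlinarith
      · exact le_of_lt (pow_pos (by linarith) 3)
    have h2 : 2 * (1 - u α) + α * L * (1 + u α) ≤ 0 := by nlinarith
    nlinarith [mul_nonneg (neg_nonneg.mpr h1) (neg_nonneg.mpr h2)]
  have hdiff : DifferentiableOn ℝ g (Set.Ioi 0) :=
    fun α hα => ((hg' α hα).differentiableAt).differentiableWithinAt
  have hderivg : ∀ α ∈ Set.Ioi (0 : ℝ), deriv g α = g₁ α := fun α hα => (hg' α hα).deriv
  have hdiff1 : DifferentiableOn ℝ (deriv g) (Set.Ioi 0) := by
    apply DifferentiableOn.congr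
      (f := g₁) (fun α hα => ((hg₁' α hα).differentiableAt).differentiableWithinAt)
    exact hderivg
  apply convexOn_of_deriv2_nonneg (convex_Ioi 0) hdiff.continuousOn
  · rwa [interior_Ioi]
  · rwa [interior_Ioi]
  · intro α hα
    rw [interior_Ioi] at hα
    have hev : deriv g =ᶠ[nhds α] g₁ :=
      Filter.eventuallyEq_of_mem (isOpen_Ioi.mem_nhds hα) hderivg
    have : deriv^[2] g α = deriv g₁ α := by
      simp only [Function.iterate_succ, Function.iterate_zero, Function.comp_apply, id]
      exact hev.deriv_eq
    rw [this, (hg₁' α hα).deriv]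
    exact hg₂nonneg α hα

/-- Lemma 2.3 (Balakrishnan et al., 2014): for fixed `t ∈ (0,1)`, the function
`τ(α) = α t^(α-1) / (1 - t^α)` is convex on `(0, ∞)`. -/
theorem tau_convexOn (t : ℝ) (ht0 : 0 < t) (ht1 : t < 1) :
    ConvexOn ℝ (Set.Ioi (0 : ℝ))
      (fun α : ℝ => α * t ^ (α - 1) / (1 - t ^ α)) := by
  set L := Real.log t with hLdef
  have hL : L < 0 := Real.log_neg ht0 ht1
  have hfun : (fun α : ℝ => α * t ^ (α - 1) / (1 - t ^ α))
      = fun α : ℝ => t⁻¹ • (α * Real.exp (α * L) / (1 - Real.exp (α * L))) := by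
    funext α
    rw [Real.rpow_def_of_pos ht0, Real.rpow_def_of_pos ht0]
    have h1 : Real.exp (L * (α - 1)) = Real.exp (α * L) * t⁻¹ := by
      rw [mul_sub, mul_one, Real.exp_sub, Real.exp_log ht0, mul_comm L α, div_eq_mul_inv]
    rw [h1, mul_comm L α, smul_eq_mul]
    ring
  rw [hfun]
  exact (g_convex hL).smul (inv_nonneg.mpr ht0.le)
end

section
/- Let n ≥ 1, let α = (α_1, …, α_n) and α* = (α*_1, …, α*_n) be n-tuples of positive real numbers each arranged in increasing order, and suppose α* is majorized by α. Then for every real number t with 0 < t < 1, ∑_{k=1}^n α*_k t^(α*_k − 1) / (1 − t^(α*_k)) ≤ ∑_{k=1}^n α_k t^(α_k − 1) / (1 − t^(α_k)). -/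
open Real Set Finset

noncomputable def psi0 (x : ℝ) : ℝ := x / (Real.exp x - 1)
noncomputable def psi1 (x : ℝ) : ℝ :=
  (Real.exp x - 1 - x * Real.exp x) / (Real.exp x - 1) ^ 2
noncomputable def psi2 (x : ℝ) : ℝ :=
  Real.exp x * (2 + x + Real.exp x * (x - 2)) / (Real.exp x - 1) ^ 3

lemma exp_sub_one_pos {x : ℝ} (hx : 0 < x) : 0 < Real.exp x - 1 := by
  have : (1 : ℝ) < Real.exp x := by
    calc (1:ℝ) = Real.exp 0 := (Real.exp_zero).symm
    _ < Real.exp x := Real.exp_lt_exp.mpr hx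
  linarith

lemma hasDerivAt_psi0 {x : ℝ} (hx : 0 < x) : HasDerivAt psi0 (psi1 x) x := by
  have hne : Real.exp x - 1 ≠ 0 := (exp_sub_one_pos hx).ne'
  have h1 : HasDerivAt (fun y : ℝ => y) 1 x := hasDerivAt_id x
  have h2 : HasDerivAt (fun y : ℝ => Real.exp y - 1) (Real.exp x) x :=
    (Real.hasDerivAt_exp x).sub_const 1
  have := h1.div h2 hne
  refine this.congr_deriv ?_
  unfold psi1
  ring

lemma hasDerivAt_psi1 {x : ℝ} (hx : 0 < x) : HasDerivAt psi1 (psi2 x) x := by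
  have hpos := exp_sub_one_pos hx
  have hne : Real.exp x - 1 ≠ 0 := hpos.ne'
  have hne2 : (Real.exp x - 1) ^ 2 ≠ 0 := pow_ne_zero 2 hne
  have hN : HasDerivAt (fun y : ℝ => Real.exp y - 1 - y * Real.exp y)
      (Real.exp x - (1 * Real.exp x + x * Real.exp x)) x :=
    ((Real.hasDerivAt_exp x).sub_const 1).sub ((hasDerivAt_id x).mul (Real.hasDerivAt_exp x))
  have hD : HasDerivAt (fun y : ℝ => (Real.exp y - 1) ^ 2)
      ((2 : ℕ) * (Real.exp x - 1) ^ 1 * Real.exp x) x :=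
    ((Real.hasDerivAt_exp x).sub_const 1).pow 2
  have := hN.div hD hne2
  refine this.congr_deriv ?_
  unfold psi2
  field_simp
  ring

/-- key inequality: `0 ≤ 2 + x + e^x (x-2)` for `x ≥ 0`. -/
lemma aux_nonneg {x : ℝ} (hx : 0 ≤ x) : 0 ≤ 2 + x + Real.exp x * (x - 2) := by
  set h1 : ℝ → ℝ := fun y => 1 + Real.exp y * (y - 1) with hh1
  have dh1 : ∀ y : ℝ, HasDerivAt h1 (y * Real.exp y) y := by
    intro y
    have : HasDerivAt (fun z : ℝ => 1 + Real.exp z * (z - 1))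
        (Real.exp y * (y - 1) + Real.exp y * 1) y :=
      ((Real.hasDerivAt_exp y).mul ((hasDerivAt_id y).sub_const 1)).const_add 1
    convert this using 1; ring
  have mono1 : MonotoneOn h1 (Ici (0:ℝ)) := by
    apply monotoneOn_of_deriv_nonneg (convex_Ici 0)
    · exact fun y _ => (dh1 y).continuousAt.continuousWithinAt
    · exact fun y _ => (dh1 y).differentiableAt.differentiableWithinAt
    · intro y hy
      rw [(dh1 y).deriv]
      rw [interior_Ici] at hy
      exact mul_nonneg (le_of_lt hy) (Real.exp_pos y).le
  have h1nonneg : ∀ y : ℝ, 0 ≤ y → 0 ≤ h1 y := by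
    intro y hy
    have := mono1 (self_mem_Ici) hy hy
    simpa [hh1, Real.exp_zero] using this
  set h0 : ℝ → ℝ := fun y => 2 + y + Real.exp y * (y - 2) with hh0
  have dh0 : ∀ y : ℝ, HasDerivAt h0 (h1 y) y := by
    intro y
    have : HasDerivAt (fun z : ℝ => 2 + z + Real.exp z * (z - 2))
        (0 + 1 + (Real.exp y * (y - 2) + Real.exp y * 1)) y :=
      ((hasDerivAt_const y (2:ℝ)).add (hasDerivAt_id y)).add
        ((Real.hasDerivAt_exp y).mul ((hasDerivAt_id y).sub_const 2))
    convert this using 1; simp [hh1]; ring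
  have mono0 : MonotoneOn h0 (Ici (0:ℝ)) := by
    apply monotoneOn_of_deriv_nonneg (convex_Ici 0)
    · exact fun y _ => (dh0 y).continuousAt.continuousWithinAt
    · exact fun y _ => (dh0 y).differentiableAt.differentiableWithinAt
    · intro y hy
      rw [(dh0 y).deriv]
      rw [interior_Ici] at hy
      exact h1nonneg y hy.le
  have := mono0 (self_mem_Ici) hx hx
  simpa [hh0, Real.exp_zero] using this

lemma psi2_nonneg {x : ℝ} (hx : 0 < x) : 0 ≤ psi2 x := by
  unfold psi2
  apply div_nonneg
  · exact mul_nonneg (Real.exp_pos x).le (aux_nonneg hx.le)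
  · exact (pow_pos (exp_sub_one_pos hx) 3).le

lemma psi1_monotoneOn : MonotoneOn psi1 (Ioi (0:ℝ)) := by
  apply monotoneOn_of_deriv_nonneg (convex_Ioi 0)
  · exact fun y hy => (hasDerivAt_psi1 hy).continuousAt.continuousWithinAt
  · rw [interior_Ioi]
    exact fun y hy => (hasDerivAt_psi1 hy).differentiableAt.differentiableWithinAt
  · rw [interior_Ioi]
    intro y hy
    rw [(hasDerivAt_psi1 hy).deriv]
    exact psi2_nonneg hy

/-- tangent line inequality for `psi0` on `(0,∞)`. -/
lemma psi0_tangent {x y : ℝ} (hx : 0 < x) (hy : 0 < y) :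
    psi0 x + psi1 x * (y - x) ≤ psi0 y := by
  rcases lt_trichotomy x y with h | h | h
  · obtain ⟨c, hc, hceq⟩ := exists_hasDerivAt_eq_slope psi0 psi1 h
      (fun z hz => (hasDerivAt_psi0 (lt_of_lt_of_le hx hz.1)).continuousAt.continuousWithinAt)
      (fun z hz => hasDerivAt_psi0 (hx.trans hz.1))
    have hcx : psi1 x ≤ psi1 c :=
      psi1_monotoneOn hx (hx.trans hc.1) hc.1.le
    have hyx : 0 < y - x := sub_pos.mpr h
    rw [eq_div_iff hyx.ne'] at hceq
    nlinarith
  · subst h; simp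
  · obtain ⟨c, hc, hceq⟩ := exists_hasDerivAt_eq_slope psi0 psi1 h
      (fun z hz => (hasDerivAt_psi0 (lt_of_lt_of_le hy hz.1)).continuousAt.continuousWithinAt)
      (fun z hz => hasDerivAt_psi0 (hy.trans hz.1))
    have hcx : psi1 c ≤ psi1 x :=
      psi1_monotoneOn (hy.trans hc.1) hx hc.2.le
    have hxy : 0 < x - y := sub_pos.mpr h
    rw [eq_div_iff hxy.ne'] at hceq
    nlinarith

/-- Schur-convexity step in Theorem 3.1: if the increasing tuple `αs` is majorized by the
increasing tuple `α` (both with positive entries), then for every `t ∈ (0,1)`,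
`∑ αs_k t^(αs_k - 1)/(1 - t^(αs_k)) ≤ ∑ α_k t^(α_k - 1)/(1 - t^(α_k))`. -/
theorem sum_tau_le_of_majorized (n : ℕ) (hn : 1 ≤ n) (α αs : ℕ → ℝ)
    (hαpos : ∀ k < n, 0 < α k) (hαspos : ∀ k < n, 0 < αs k)
    (hαmono : ∀ i, ∀ j, i ≤ j → j < n → α i ≤ α j)
    (hαsmono : ∀ i, ∀ j, i ≤ j → j < n → αs i ≤ αs j)
    (hmaj : ∀ i, 1 ≤ i → i ≤ n - 1 →
      ∑ k ∈ Finset.range i, α k ≤ ∑ k ∈ Finset.range i, αs k)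
    (hsum : ∑ k ∈ Finset.range n, αs k = ∑ k ∈ Finset.range n, α k)
    (t : ℝ) (ht0 : 0 < t) (ht1 : t < 1) :
    ∑ k ∈ Finset.range n, αs k * t ^ (αs k - 1) / (1 - t ^ αs k) ≤
      ∑ k ∈ Finset.range n, α k * t ^ (α k - 1) / (1 - t ^ α k) := by
  set c : ℝ := -Real.log t with hc_def
  have hc : 0 < c := by
    have := Real.log_neg ht0 ht1
    simp only [hc_def]; linarith
  -- rewrite each summand through psi0
  have hG : ∀ a : ℝ, 0 < a →
      a * t ^ (a - 1) / (1 - t ^ a) = (1 / (c * t)) * psi0 (c * a) := by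
    intro a ha
    have hu0 : 0 < t ^ a := Real.rpow_pos_of_pos ht0 a
    have hu1 : t ^ a < 1 := Real.rpow_lt_one ht0.le ht1 ha
    have hexp : Real.exp (c * a) = (t ^ a)⁻¹ := by
      rw [Real.rpow_def_of_pos ht0, ← Real.exp_neg]
      rw [hc_def]
      ring_nf
    have hsub : t ^ (a - 1) = t ^ a / t := by
      rw [Real.rpow_sub ht0, Real.rpow_one]
    rw [hsub]
    unfold psi0
    rw [hexp]
    have hne1 : 1 - t ^ a ≠ 0 := by linarith
    field_simp
  -- tangent coefficients
  set C : ℕ → ℝ := fun k => psi1 (c * αs k) / t with hC_def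
  have hCmono : ∀ i j, i ≤ j → j < n → C i ≤ C j := by
    intro i j hij hjn
    have hi : (0:ℝ) < c * αs i := mul_pos hc (hαspos i (lt_of_le_of_lt hij hjn))
    have hj : (0:ℝ) < c * αs j := mul_pos hc (hαspos j hjn)
    have hps : psi1 (c * αs i) ≤ psi1 (c * αs j) :=
      psi1_monotoneOn hi hj
        (mul_le_mul_of_nonneg_left (hαsmono i j hij hjn) hc.le)
    exact div_le_div_of_nonneg_right hps ht0.le
  -- tangent inequality per term
  have key : ∀ k < n,
      αs k * t ^ (αs k - 1) / (1 - t ^ αs k) + C k * (α k - αs k) ≤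
        α k * t ^ (α k - 1) / (1 - t ^ α k) := by
    intro k hk
    have has := hαspos k hk
    have ha := hαpos k hk
    rw [hG _ has, hG _ ha]
    have htan := psi0_tangent (mul_pos hc has) (mul_pos hc ha)
    have hpos : (0:ℝ) < 1 / (c * t) := by positivity
    calc (1 / (c * t)) * psi0 (c * αs k) + C k * (α k - αs k)
        = (1 / (c * t)) * (psi0 (c * αs k) + psi1 (c * αs k) * (c * α k - c * αs k)) := by
          simp only [hC_def]
          field_simp
      _ ≤ (1 / (c * t)) * psi0 (c * α k) := mul_le_mul_of_nonneg_left htan hpos.le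
  -- Abel summation: the correction term is nonnegative
  have habel : 0 ≤ ∑ k ∈ Finset.range n, C k * (α k - αs k) := by
    set d : ℕ → ℝ := fun k => α k - αs k with hd_def
    have hby := Finset.sum_range_by_parts C d n
    simp only [smul_eq_mul] at hby
    have hStot : ∑ i ∈ Finset.range n, d i = 0 := by
      simp only [hd_def, Finset.sum_sub_distrib]
      linarith [hsum]
    have hSle : ∀ i, 1 ≤ i → i ≤ n - 1 → ∑ k ∈ Finset.range i, d k ≤ 0 := by
      intro i h1 h2
      simp only [hd_def, Finset.sum_sub_distrib]
      linarith [hmaj i h1 h2]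
    rw [hby, hStot, mul_zero, zero_sub]
    rw [neg_nonneg]
    apply Finset.sum_nonpos
    intro i hi
    rw [Finset.mem_range] at hi
    have h1 : i + 1 < n := by omega
    have hCle : C i ≤ C (i + 1) := hCmono i (i + 1) (Nat.le_succ i) h1
    have hS : ∑ k ∈ Finset.range (i + 1), d k ≤ 0 := hSle (i + 1) (by omega) (by omega)
    exact mul_nonpos_of_nonneg_of_nonpos (by linarith) hS
  -- combine
  have hsum_le : ∑ k ∈ Finset.range n,
      (αs k * t ^ (αs k - 1) / (1 - t ^ αs k) + C k * (α k - αs k)) ≤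
      ∑ k ∈ Finset.range n, α k * t ^ (α k - 1) / (1 - t ^ α k) :=
    Finset.sum_le_sum fun k hk => key k (Finset.mem_range.mp hk)
  rw [Finset.sum_add_distrib] at hsum_le
  linarith
end

section
/- Let n ≥ 1, let α = (α_1, …, α_n) and α* = (α*_1, …, α*_n) be n-tuples of positive real numbers each arranged in increasing order, and suppose α* is majorized by α. Then the function t ↦ [∏_{k=1}^n (1 − t^(α*_k))] / [∏_{k=1}^n (1 − t^(α_k))] is monotone nondecreasing on the open interval (0, 1). -/
open Real Finset Set

/-- If `f 0 = 0`, `f` has derivative `f'` everywhere, and `f' ≥ 0` on `[0,∞)`,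
then `f ≥ 0` on `[0,∞)`. -/
lemma nonneg_of_deriv_nonneg (f f' : ℝ → ℝ)
    (hd : ∀ x : ℝ, HasDerivAt f (f' x) x) (h0 : f 0 = 0)
    (hf' : ∀ x : ℝ, 0 ≤ x → 0 ≤ f' x) : ∀ x : ℝ, 0 ≤ x → 0 ≤ f x := by
  have hmono : MonotoneOn f (Ici (0:ℝ)) := by
    apply monotoneOn_of_deriv_nonneg (convex_Ici 0)
    · exact fun x _ => (hd x).continuousAt.continuousWithinAt
    · exact fun x _ => (hd x).differentiableAt.differentiableWithinAt
    · intro x hx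
      rw [interior_Ici] at hx
      rw [(hd x).deriv]
      exact hf' x hx.le
  intro x hx
  have := hmono (self_mem_Ici) hx hx
  rwa [h0] at this

lemma aux_q1 (x : ℝ) (hx : 0 ≤ x) : 0 ≤ 1 + (x - 1) * Real.exp x := by
  have hd : ∀ y : ℝ, HasDerivAt (fun y : ℝ => 1 + (y - 1) * Real.exp y)
      (y * Real.exp y) y := by
    intro y
    have h1 : HasDerivAt (fun y : ℝ => (y - 1) * Real.exp y)
        (1 * Real.exp y + (y - 1) * Real.exp y) y :=
      ((hasDerivAt_id y).sub_const 1).mul (Real.hasDerivAt_exp y)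
    have := h1.const_add 1
    exact this.congr_deriv (by ring)
  have := nonneg_of_deriv_nonneg _ _ hd (by simp)
    (fun y hy => mul_nonneg hy (Real.exp_pos y).le) x hx
  exact this

lemma aux_q (x : ℝ) (hx : 0 ≤ x) : 0 ≤ (x - 2) * Real.exp x + x + 2 := by
  have hd : ∀ y : ℝ, HasDerivAt (fun y : ℝ => (y - 2) * Real.exp y + y + 2)
      (1 + (y - 1) * Real.exp y) y := by
    intro y
    have h1 : HasDerivAt (fun y : ℝ => (y - 2) * Real.exp y)
        (1 * Real.exp y + (y - 2) * Real.exp y) y :=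
      ((hasDerivAt_id y).sub_const 2).mul (Real.hasDerivAt_exp y)
    have := (h1.add (hasDerivAt_id y)).add_const 2
    exact this.congr_deriv (by ring)
  have := nonneg_of_deriv_nonneg _ _ hd (by simp) (fun y hy => aux_q1 y hy) x hx
  simpa using this


/-- HLP-type majorization inequality via tangent lines and Abel summation. -/
lemma sum_le_sum_of_majorize (n : ℕ) (α αs : ℕ → ℝ)
    (hαpos : ∀ k < n, 0 < α k) (hαspos : ∀ k < n, 0 < αs k)
    (hαsmono : ∀ i, ∀ j, i ≤ j → j < n → αs i ≤ αs j)
    (hmaj : ∀ i, 1 ≤ i → i ≤ n - 1 →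
      ∑ k ∈ Finset.range i, α k ≤ ∑ k ∈ Finset.range i, αs k)
    (hsum : ∑ k ∈ Finset.range n, αs k = ∑ k ∈ Finset.range n, α k)
    (g φ : ℝ → ℝ)
    (hg : ∀ a : ℝ, 0 < a → HasDerivAt g (φ a) a)
    (hφ : ∀ a b : ℝ, 0 < a → a ≤ b → φ a ≤ φ b) :
    ∑ k ∈ Finset.range n, g (αs k) ≤ ∑ k ∈ Finset.range n, g (α k) := by
  -- tangent line inequality
  have tangent : ∀ x y : ℝ, 0 < x → 0 < y → φ x * (y - x) ≤ g y - g x := by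
    intro x y hx hy
    rcases lt_trichotomy x y with h | h | h
    · obtain ⟨c, hc, hceq⟩ := exists_hasDerivAt_eq_slope g φ h
        (fun z hz => (hg z (lt_of_lt_of_le hx hz.1)).continuousAt.continuousWithinAt)
        (fun z hz => hg z (lt_trans hx hz.1))
      have hφc : φ x ≤ φ c := hφ x c hx hc.1.le
      have hxy : 0 < y - x := sub_pos.mpr h
      have : φ c * (y - x) = g y - g x := by
        field_simp at hceq; linarith [hceq]
      nlinarith
    · simp [h]
    · obtain ⟨c, hc, hceq⟩ := exists_hasDerivAt_eq_slope g φ h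
        (fun z hz => (hg z (lt_of_lt_of_le hy hz.1)).continuousAt.continuousWithinAt)
        (fun z hz => hg z (lt_trans hy hz.1))
      have hφc : φ c ≤ φ x := hφ c x (lt_trans hy hc.1) hc.2.le
      have hxy : 0 < x - y := sub_pos.mpr h
      have : φ c * (x - y) = g x - g y := by
        field_simp at hceq; linarith [hceq]
      nlinarith
  -- Abel summation bound
  have key : 0 ≤ ∑ k ∈ Finset.range n, φ (αs k) * (α k - αs k) := by
    have habel := Finset.sum_range_by_parts (fun k => φ (αs k))
      (fun k => α k - αs k) n
    simp only [smul_eq_mul] at habel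
    rw [habel]
    have hD : ∑ i ∈ Finset.range n, (α i - αs i) = 0 := by
      rw [Finset.sum_sub_distrib, hsum]; ring
    rw [hD, mul_zero, zero_sub, le_neg, neg_zero]
    apply Finset.sum_nonpos
    intro i hi
    rw [Finset.mem_range] at hi
    have hi1 : i + 1 ≤ n - 1 := by omega
    have hin : i + 1 < n := by omega
    have hc : 0 ≤ φ (αs (i + 1)) - φ (αs i) := by
      have := hφ (αs i) (αs (i + 1)) (hαspos i (by omega))
        (hαsmono i (i + 1) (by omega) hin)
      linarith
    have hDz : ∑ k ∈ Finset.range (i + 1), (α k - αs k) ≤ 0 := by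
      rw [Finset.sum_sub_distrib]
      have := hmaj (i + 1) (by omega) hi1
      linarith
    exact mul_nonpos_of_nonneg_of_nonpos hc hDz
  have step : ∑ k ∈ Finset.range n, φ (αs k) * (α k - αs k) ≤
      ∑ k ∈ Finset.range n, (g (α k) - g (αs k)) := by
    apply Finset.sum_le_sum
    intro k hk
    rw [Finset.mem_range] at hk
    exact tangent (αs k) (α k) (hαspos k hk) (hαpos k hk)
  have := le_trans key step
  rw [Finset.sum_sub_distrib] at this
  linarith


lemma rpow_mem (t a : ℝ) (ht0 : 0 < t) (ht1 : t < 1) (ha : 0 < a) :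
    0 < t ^ a ∧ t ^ a < 1 :=
  ⟨Real.rpow_pos_of_pos ht0 a, Real.rpow_lt_one ht0.le ht1 ha⟩

lemma key_ineq (t a : ℝ) (ht0 : 0 < t) (ht1 : t < 1) (ha : 0 < a) :
    2 * (1 - t ^ a) + a * Real.log t * (1 + t ^ a) ≤ 0 := by
  have hL : Real.log t < 0 := Real.log_neg ht0 ht1
  have hu : t ^ a = Real.exp (a * Real.log t) := by
    rw [Real.rpow_def_of_pos ht0, mul_comm]
  set x : ℝ := -(a * Real.log t) with hxdef
  have hx : 0 < x := by
    have := mul_pos ha (neg_pos.mpr hL); rw [hxdef]; nlinarith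
  have hq := aux_q x hx.le
  have hinv : Real.exp x * Real.exp (-x) = 1 := by
    rw [← Real.exp_add]; simp
  have hux : t ^ a = Real.exp (-x) := by rw [hu, hxdef, neg_neg]
  rw [hux]
  have hex := Real.exp_pos x
  have henx := Real.exp_pos (-x)
  have haL : a * Real.log t = -x := by rw [hxdef, neg_neg]
  rw [haL]
  nlinarith [mul_nonneg hq henx.le]

lemma hasDerivAt_base (t a : ℝ) (ht0 : 0 < t) :
    HasDerivAt (fun a : ℝ => t ^ a) (t ^ a * Real.log t) a :=
  (Real.hasStrictDerivAt_const_rpow ht0 a).hasDerivAt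

lemma hasDerivAt_g (t a : ℝ) (ht0 : 0 < t) (ht1 : t < 1) (ha : 0 < a) :
    HasDerivAt (fun a : ℝ => a * t ^ a / (1 - t ^ a))
      (t ^ a * (1 - t ^ a + a * Real.log t) / (1 - t ^ a) ^ 2) a := by
  obtain ⟨hu0, hu1⟩ := rpow_mem t a ht0 ht1 ha
  have hne : 1 - t ^ a ≠ 0 := by linarith
  have hnum : HasDerivAt (fun a : ℝ => a * t ^ a)
      (1 * t ^ a + a * (t ^ a * Real.log t)) a :=
    (hasDerivAt_id a).mul (hasDerivAt_base t a ht0)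
  have hden : HasDerivAt (fun a : ℝ => 1 - t ^ a) (-(t ^ a * Real.log t)) a := by
    simpa using (hasDerivAt_base t a ht0).const_sub 1
  have := hnum.div hden hne
  exact this.congr_deriv (by ring)

lemma phi_deriv (t a : ℝ) (ht0 : 0 < t) (ht1 : t < 1) (ha : 0 < a) :
    ∃ d : ℝ, HasDerivAt
      (fun a : ℝ => t ^ a * (1 - t ^ a + a * Real.log t) / (1 - t ^ a) ^ 2) d a
      ∧ 0 ≤ d := by
  obtain ⟨hu0, hu1⟩ := rpow_mem t a ht0 ht1 ha
  have hL : Real.log t < 0 := Real.log_neg ht0 ht1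
  have hne : 1 - t ^ a ≠ 0 := by linarith
  have hne2 : (1 - t ^ a) ^ 2 ≠ 0 := pow_ne_zero 2 hne
  have hb := hasDerivAt_base t a ht0
  have hnum : HasDerivAt (fun a : ℝ => t ^ a * (1 - t ^ a + a * Real.log t))
      (t ^ a * Real.log t * (1 - t ^ a + a * Real.log t)
        + t ^ a * (-(t ^ a * Real.log t) + 1 * Real.log t)) a := by
    exact hb.mul ((hb.const_sub 1).add ((hasDerivAt_id a).mul_const (Real.log t)))
  have hden : HasDerivAt (fun a : ℝ => (1 - t ^ a) ^ 2)
      (2 * (1 - t ^ a) ^ 1 * -(t ^ a * Real.log t)) a := by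
    have h1 : HasDerivAt (fun a : ℝ => 1 - t ^ a) (-(t ^ a * Real.log t)) a := by
      simpa using hb.const_sub 1
    exact h1.pow 2
  refine ⟨_, hnum.div hden hne2, ?_⟩
  have hfact :
      (t ^ a * Real.log t * (1 - t ^ a + a * Real.log t)
          + t ^ a * (-(t ^ a * Real.log t) + 1 * Real.log t)) * (1 - t ^ a) ^ 2
        - t ^ a * (1 - t ^ a + a * Real.log t)
            * (2 * (1 - t ^ a) ^ 1 * -(t ^ a * Real.log t))
      = (1 - t ^ a) *
          ((Real.log t * t ^ a) *
            (2 * (1 - t ^ a) + a * Real.log t * (1 + t ^ a))) := by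
    ring
  apply div_nonneg
  · rw [hfact]
    apply mul_nonneg (by linarith)
    have h1 : Real.log t * t ^ a ≤ 0 := by nlinarith
    have h2 := key_ineq t a ht0 ht1 ha
    nlinarith [mul_nonneg (neg_nonneg.mpr h1) (neg_nonneg.mpr h2)]
  · positivity

lemma phi_mono (t : ℝ) (ht0 : 0 < t) (ht1 : t < 1) :
    ∀ a b : ℝ, 0 < a → a ≤ b →
      t ^ a * (1 - t ^ a + a * Real.log t) / (1 - t ^ a) ^ 2
        ≤ t ^ b * (1 - t ^ b + b * Real.log t) / (1 - t ^ b) ^ 2 := by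
  have hmono : MonotoneOn
      (fun a : ℝ => t ^ a * (1 - t ^ a + a * Real.log t) / (1 - t ^ a) ^ 2)
      (Ioi (0:ℝ)) := by
    apply monotoneOn_of_deriv_nonneg (convex_Ioi 0)
    · intro x hx
      obtain ⟨d, hd, _⟩ := phi_deriv t x ht0 ht1 hx
      exact hd.continuousAt.continuousWithinAt
    · intro x hx
      rw [interior_Ioi] at hx
      obtain ⟨d, hd, _⟩ := phi_deriv t x ht0 ht1 hx
      exact hd.differentiableAt.differentiableWithinAt
    · intro x hx
      rw [interior_Ioi] at hx
      obtain ⟨d, hd, hd0⟩ := phi_deriv t x ht0 ht1 hx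
      rw [hd.deriv]; exact hd0
  intro a b ha hab
  exact hmono ha (lt_of_lt_of_le ha hab) hab


/-- Theorem 3.1 (hazard rate order of series systems), analytic form: if the increasing
tuple `αs` is majorized by the increasing tuple `α` (both with positive entries), then
`t ↦ (∏ (1 - t^(αs_k))) / (∏ (1 - t^(α_k)))` is nondecreasing on `(0,1)`. -/
theorem survival_ratio_monotoneOn (n : ℕ) (hn : 1 ≤ n) (α αs : ℕ → ℝ)
    (hαpos : ∀ k < n, 0 < α k) (hαspos : ∀ k < n, 0 < αs k)
    (hαmono : ∀ i, ∀ j, i ≤ j → j < n → α i ≤ α j)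
    (hαsmono : ∀ i, ∀ j, i ≤ j → j < n → αs i ≤ αs j)
    (hmaj : ∀ i, 1 ≤ i → i ≤ n - 1 →
      ∑ k ∈ Finset.range i, α k ≤ ∑ k ∈ Finset.range i, αs k)
    (hsum : ∑ k ∈ Finset.range n, αs k = ∑ k ∈ Finset.range n, α k) :
    MonotoneOn
      (fun t : ℝ =>
        (∏ k ∈ Finset.range n, (1 - t ^ αs k)) /
          (∏ k ∈ Finset.range n, (1 - t ^ α k)))
      (Set.Ioo (0 : ℝ) 1) := by
  set F : ℝ → ℝ := fun t =>
    (∑ k ∈ Finset.range n, Real.log (1 - t ^ αs k)) -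
      ∑ k ∈ Finset.range n, Real.log (1 - t ^ α k) with hFdef
  -- each factor is positive on (0,1)
  have hfac : ∀ (c : ℝ), 0 < c → ∀ x ∈ Set.Ioo (0:ℝ) 1, 0 < 1 - x ^ c := by
    intro c hc x hx
    have := (rpow_mem x c hx.1 hx.2 hc).2
    linarith
  -- the ratio equals exp (F t) on (0,1)
  have hratio : ∀ x ∈ Set.Ioo (0:ℝ) 1,
      (∏ k ∈ Finset.range n, (1 - x ^ αs k)) /
        (∏ k ∈ Finset.range n, (1 - x ^ α k)) = Real.exp (F x) := by
    intro x hx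
    have h1 : ∏ k ∈ Finset.range n, (1 - x ^ αs k) =
        Real.exp (∑ k ∈ Finset.range n, Real.log (1 - x ^ αs k)) := by
      rw [Real.exp_sum]
      exact (Finset.prod_congr rfl fun k hk =>
        (Real.exp_log (hfac (αs k) (hαspos k (Finset.mem_range.mp hk)) x hx)).symm)
    have h2 : ∏ k ∈ Finset.range n, (1 - x ^ α k) =
        Real.exp (∑ k ∈ Finset.range n, Real.log (1 - x ^ α k)) := by
      rw [Real.exp_sum]
      exact (Finset.prod_congr rfl fun k hk =>
        (Real.exp_log (hfac (α k) (hαpos k (Finset.mem_range.mp hk)) x hx)).symm)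
    rw [h1, h2, ← Real.exp_sub, hFdef]
  -- derivative of each log term
  have hterm : ∀ (c : ℝ), 0 < c → ∀ x ∈ Set.Ioo (0:ℝ) 1,
      HasDerivAt (fun t : ℝ => Real.log (1 - t ^ c))
        (-(c * x ^ (c - 1)) / (1 - x ^ c)) x := by
    intro c hc x hx
    have h1 : HasDerivAt (fun t : ℝ => t ^ c) (c * x ^ (c - 1)) x :=
      Real.hasDerivAt_rpow_const (Or.inl hx.1.ne')
    have h2 : HasDerivAt (fun t : ℝ => 1 - t ^ c) (-(c * x ^ (c - 1))) x :=
      h1.const_sub 1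
    exact h2.log (hfac c hc x hx).ne'
  -- derivative of F
  have hF : ∀ x ∈ Set.Ioo (0:ℝ) 1,
      HasDerivAt F
        ((∑ k ∈ Finset.range n, -(αs k * x ^ (αs k - 1)) / (1 - x ^ αs k)) -
          ∑ k ∈ Finset.range n, -(α k * x ^ (α k - 1)) / (1 - x ^ α k)) x := by
    intro x hx
    have hs1 : HasDerivAt (fun t : ℝ => ∑ k ∈ Finset.range n, Real.log (1 - t ^ αs k))
        (∑ k ∈ Finset.range n, -(αs k * x ^ (αs k - 1)) / (1 - x ^ αs k)) x :=
      HasDerivAt.fun_sum fun k hk =>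
        hterm (αs k) (hαspos k (Finset.mem_range.mp hk)) x hx
    have hs2 : HasDerivAt (fun t : ℝ => ∑ k ∈ Finset.range n, Real.log (1 - t ^ α k))
        (∑ k ∈ Finset.range n, -(α k * x ^ (α k - 1)) / (1 - x ^ α k)) x :=
      HasDerivAt.fun_sum fun k hk =>
        hterm (α k) (hαpos k (Finset.mem_range.mp hk)) x hx
    exact hs1.sub hs2
  -- the derivative of F is nonneg on (0,1)
  have hEnonneg : ∀ x ∈ Set.Ioo (0:ℝ) 1,
      0 ≤ (∑ k ∈ Finset.range n, -(αs k * x ^ (αs k - 1)) / (1 - x ^ αs k)) -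
          ∑ k ∈ Finset.range n, -(α k * x ^ (α k - 1)) / (1 - x ^ α k) := by
    intro x hx
    have hx0 : (0:ℝ) < x := hx.1
    have hrw : ∀ (c : ℝ), 0 < c →
        -(c * x ^ (c - 1)) / (1 - x ^ c) =
          -(1 / x) * (c * x ^ c / (1 - x ^ c)) := by
      intro c hc
      have hxc : x ^ (c - 1) = x ^ c / x := by
        rw [Real.rpow_sub hx0, Real.rpow_one]
      have hne : 1 - x ^ c ≠ 0 := (hfac c hc x hx).ne'
      rw [hxc]
      field_simp
    have hS : ∑ k ∈ Finset.range n, (fun a : ℝ => a * x ^ a / (1 - x ^ a)) (αs k) ≤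
        ∑ k ∈ Finset.range n, (fun a : ℝ => a * x ^ a / (1 - x ^ a)) (α k) := by
      apply sum_le_sum_of_majorize n α αs hαpos hαspos hαsmono hmaj hsum
        (fun a : ℝ => a * x ^ a / (1 - x ^ a))
        (fun a : ℝ => x ^ a * (1 - x ^ a + a * Real.log x) / (1 - x ^ a) ^ 2)
      · exact fun a ha => hasDerivAt_g x a hx.1 hx.2 ha
      · exact fun a b ha hab => phi_mono x hx.1 hx.2 a b ha hab
    simp only at hS
    have e1 : ∑ k ∈ Finset.range n, -(αs k * x ^ (αs k - 1)) / (1 - x ^ αs k) =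
        -(1 / x) * ∑ k ∈ Finset.range n, αs k * x ^ αs k / (1 - x ^ αs k) := by
      rw [Finset.mul_sum]
      exact Finset.sum_congr rfl fun k hk =>
        hrw (αs k) (hαspos k (Finset.mem_range.mp hk))
    have e2 : ∑ k ∈ Finset.range n, -(α k * x ^ (α k - 1)) / (1 - x ^ α k) =
        -(1 / x) * ∑ k ∈ Finset.range n, α k * x ^ α k / (1 - x ^ α k) := by
      rw [Finset.mul_sum]
      exact Finset.sum_congr rfl fun k hk =>
        hrw (α k) (hαpos k (Finset.mem_range.mp hk))
    rw [e1, e2]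
    have hix : 0 < 1 / x := by positivity
    nlinarith [hS]
  -- F is monotone on (0,1)
  have hFmono : MonotoneOn F (Set.Ioo (0:ℝ) 1) := by
    apply monotoneOn_of_deriv_nonneg (convex_Ioo 0 1)
    · exact fun x hx => (hF x hx).continuousAt.continuousWithinAt
    · intro x hx
      rw [interior_Ioo] at hx
      exact (hF x hx).differentiableAt.differentiableWithinAt
    · intro x hx
      rw [interior_Ioo] at hx
      rw [(hF x hx).deriv]
      exact hEnonneg x hx
  -- conclude
  intro a ha b hb hab
  simp only
  rw [hratio a ha, hratio b hb]
  exact Real.exp_le_exp.mpr (hFmono ha hb hab)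
end

section
/- Let n ≥ 1, let α = (α_1, …, α_n) and α* = (α*_1, …, α*_n) be n-tuples of positive real numbers each arranged in increasing order, and suppose α* is majorized by α. Then for every real number t with 0 ≤ t ≤ 1, ∏_{k=1}^n (1 − t^(α_k)) ≤ ∏_{k=1}^n (1 − t^(α*_k)). -/
open Finset Real

/-- The "slope" function `a ↦ (-log t) * t^a / (1 - t^a)`. -/
noncomputable def slopeFun (t a : ℝ) : ℝ := (-Real.log t) * t ^ a / (1 - t ^ a)

lemma rpow_mem01 {t a : ℝ} (h0 : 0 < t) (h1 : t < 1) (ha : 0 < a) :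
    0 < t ^ a ∧ t ^ a < 1 :=
  ⟨Real.rpow_pos_of_pos h0 a, Real.rpow_lt_one h0.le h1 ha⟩

/-- Tangent (supergradient) inequality for `a ↦ log (1 - t^a)`. -/
lemma tangent_ineq {t a b : ℝ} (h0 : 0 < t) (h1 : t < 1) (ha : 0 < a) (hb : 0 < b) :
    Real.log (1 - t ^ b) ≤ Real.log (1 - t ^ a) + slopeFun t a * (b - a) := by
  obtain ⟨hta, hta1⟩ := rpow_mem01 h0 h1 ha
  obtain ⟨htb, htb1⟩ := rpow_mem01 h0 h1 hb
  have h1a : 0 < 1 - t ^ a := by linarith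
  have h1b : 0 < 1 - t ^ b := by linarith
  have key : t ^ a - t ^ b ≤ (-Real.log t) * t ^ a * (b - a) := by
    have hsplit : t ^ b = t ^ a * Real.exp (Real.log t * (b - a)) := by
      rw [← Real.rpow_def_of_pos h0, ← Real.rpow_add h0]
      ring_nf
    have hexp := Real.add_one_le_exp (Real.log t * (b - a))
    nlinarith [mul_le_mul_of_nonneg_left hexp hta.le]
  have hlog : Real.log (1 - t ^ b) - Real.log (1 - t ^ a) ≤ (t ^ a - t ^ b) / (1 - t ^ a) := by
    have hq : 0 < (1 - t ^ b) / (1 - t ^ a) := div_pos h1b h1a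
    have h2 := Real.log_le_sub_one_of_pos hq
    rw [Real.log_div h1b.ne' h1a.ne'] at h2
    have h3 : (1 - t ^ b) / (1 - t ^ a) - 1 = (t ^ a - t ^ b) / (1 - t ^ a) := by
      field_simp
      ring
    linarith
  have hdiv : (t ^ a - t ^ b) / (1 - t ^ a) ≤ slopeFun t a * (b - a) := by
    have : slopeFun t a * (b - a) = ((-Real.log t) * t ^ a * (b - a)) / (1 - t ^ a) := by
      unfold slopeFun; ring
    rw [this]
    gcongr
  linarith

/-- The slope function is antitone in `a` for `0 < t < 1` and positive exponents. -/
lemma slope_antitone {t a b : ℝ} (h0 : 0 < t) (h1 : t < 1) (ha : 0 < a) (hab : a ≤ b) :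
    slopeFun t b ≤ slopeFun t a := by
  have hb : 0 < b := lt_of_lt_of_le ha hab
  obtain ⟨hta, hta1⟩ := rpow_mem01 h0 h1 ha
  obtain ⟨htb, htb1⟩ := rpow_mem01 h0 h1 hb
  have h1a : 0 < 1 - t ^ a := by linarith
  have h1b : 0 < 1 - t ^ b := by linarith
  have hc : 0 < -Real.log t := by
    have := Real.log_neg h0 h1; linarith
  have hba : t ^ b ≤ t ^ a := Real.rpow_le_rpow_of_exponent_ge h0 h1.le hab
  unfold slopeFun
  rw [div_le_div_iff₀ h1b h1a]
  nlinarith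

/-- Usual stochastic order of series systems implied by Theorem 3.1: if the increasing
tuple `αs` is majorized by the increasing tuple `α` (both with positive entries), then for
every `t ∈ [0,1]`, `∏ (1 - t^(α_k)) ≤ ∏ (1 - t^(αs_k))`. -/
theorem prod_survival_le_of_majorized (n : ℕ) (hn : 1 ≤ n) (α αs : ℕ → ℝ)
    (hαpos : ∀ k < n, 0 < α k) (hαspos : ∀ k < n, 0 < αs k)
    (hαmono : ∀ i, ∀ j, i ≤ j → j < n → α i ≤ α j)
    (hαsmono : ∀ i, ∀ j, i ≤ j → j < n → αs i ≤ αs j)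
    (hmaj : ∀ i, 1 ≤ i → i ≤ n - 1 →
      ∑ k ∈ Finset.range i, α k ≤ ∑ k ∈ Finset.range i, αs k)
    (hsum : ∑ k ∈ Finset.range n, αs k = ∑ k ∈ Finset.range n, α k)
    (t : ℝ) (ht0 : 0 ≤ t) (ht1 : t ≤ 1) :
    ∏ k ∈ Finset.range n, (1 - t ^ α k) ≤
      ∏ k ∈ Finset.range n, (1 - t ^ αs k) := by
  rcases eq_or_lt_of_le ht0 with h0 | h0
  · -- t = 0
    have e1 : ∏ k ∈ Finset.range n, (1 - t ^ α k) = 1 :=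
      Finset.prod_eq_one fun k hk => by
        rw [← h0, Real.zero_rpow (hαpos k (Finset.mem_range.mp hk)).ne']; ring
    have e2 : ∏ k ∈ Finset.range n, (1 - t ^ αs k) = 1 :=
      Finset.prod_eq_one fun k hk => by
        rw [← h0, Real.zero_rpow (hαspos k (Finset.mem_range.mp hk)).ne']; ring
    rw [e1, e2]
  rcases eq_or_lt_of_le ht1 with h1 | h1
  · -- t = 1
    have hm : (0 : ℕ) ∈ Finset.range n := Finset.mem_range.mpr hn
    have e1 : ∏ k ∈ Finset.range n, (1 - t ^ α k) = 0 :=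
      Finset.prod_eq_zero hm (by rw [h1, Real.one_rpow]; ring)
    have e2 : ∏ k ∈ Finset.range n, (1 - t ^ αs k) = 0 :=
      Finset.prod_eq_zero hm (by rw [h1, Real.one_rpow]; ring)
    rw [e1, e2]
  -- 0 < t < 1
  have hfa : ∀ k < n, 0 < 1 - t ^ α k := fun k hk => by
    have := (rpow_mem01 h0 h1 (hαpos k hk)).2; linarith
  have hfs : ∀ k < n, 0 < 1 - t ^ αs k := fun k hk => by
    have := (rpow_mem01 h0 h1 (hαspos k hk)).2; linarith
  -- Abel / Karamata part
  set d : ℕ → ℝ := fun k => slopeFun t (αs k) with hd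
  set e : ℕ → ℝ := fun k => α k - αs k with he
  set S : ℕ → ℝ := fun m => ∑ k ∈ Finset.range m, e k with hS
  have hSn : S n = 0 := by
    simp only [hS, he, Finset.sum_sub_distrib]
    rw [hsum]; ring
  have hSle : ∀ m, 1 ≤ m → m ≤ n → S m ≤ 0 := by
    intro m hm1 hmn
    rcases eq_or_lt_of_le hmn with rfl | hmlt
    · exact le_of_eq hSn
    · have : m ≤ n - 1 := by omega
      have := hmaj m hm1 this
      simp only [hS, he, Finset.sum_sub_distrib]
      linarith
  have hdmono : ∀ i j, i ≤ j → j < n → d j ≤ d i := by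
    intro i j hij hjn
    exact slope_antitone h0 h1 (hαspos i (lt_of_le_of_lt hij hjn))
      (hαsmono i j hij hjn)
  have claim : ∀ m, 1 ≤ m → m ≤ n → ∑ k ∈ Finset.range m, d k * e k ≤ d (m - 1) * S m := by
    intro m
    induction m with
    | zero => intro h; omega
    | succ m ih =>
      intro _ hmn
      rcases Nat.eq_zero_or_pos m with rfl | hm
      · simp [hS]
      · have hmn' : m ≤ n := le_of_lt (Nat.lt_of_succ_le hmn)
        have hstep := ih hm hmn'
        have hSm : S m ≤ 0 := hSle m hm hmn'
        have hdle : d m ≤ d (m - 1) := hdmono (m - 1) m (Nat.sub_le m 1)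
          (Nat.lt_of_succ_le hmn)
        have hSsucc : S (m + 1) = S m + e m := by
          simp [hS, Finset.sum_range_succ]
        rw [Finset.sum_range_succ]
        have : d (m - 1) * S m ≤ d m * S m :=
          mul_le_mul_of_nonpos_right hdle hSm
        calc ∑ k ∈ Finset.range m, d k * e k + d m * e m
            ≤ d (m - 1) * S m + d m * e m := by linarith
          _ ≤ d m * S m + d m * e m := by linarith
          _ = d (m + 1 - 1) * S (m + 1) := by rw [Nat.add_sub_cancel, hSsucc]; ring
  have habel : ∑ k ∈ Finset.range n, d k * e k ≤ 0 := by
    have := claim n hn le_rfl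
    rw [hSn] at this
    simpa using this
  -- sum of logs comparison
  have hlogsum : ∑ k ∈ Finset.range n, Real.log (1 - t ^ α k) ≤
      ∑ k ∈ Finset.range n, Real.log (1 - t ^ αs k) := by
    have hterm : ∀ k ∈ Finset.range n,
        Real.log (1 - t ^ α k) ≤ Real.log (1 - t ^ αs k) + d k * e k := by
      intro k hk
      have hk' := Finset.mem_range.mp hk
      exact tangent_ineq h0 h1 (hαspos k hk') (hαpos k hk')
    calc ∑ k ∈ Finset.range n, Real.log (1 - t ^ α k)
        ≤ ∑ k ∈ Finset.range n, (Real.log (1 - t ^ αs k) + d k * e k) :=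
          Finset.sum_le_sum hterm
      _ = ∑ k ∈ Finset.range n, Real.log (1 - t ^ αs k)
          + ∑ k ∈ Finset.range n, d k * e k := Finset.sum_add_distrib
      _ ≤ ∑ k ∈ Finset.range n, Real.log (1 - t ^ αs k) := by linarith
  -- back to products
  have hP : 0 < ∏ k ∈ Finset.range n, (1 - t ^ α k) :=
    Finset.prod_pos fun k hk => hfa k (Finset.mem_range.mp hk)
  have hQ : 0 < ∏ k ∈ Finset.range n, (1 - t ^ αs k) :=
    Finset.prod_pos fun k hk => hfs k (Finset.mem_range.mp hk)
  have hlP : Real.log (∏ k ∈ Finset.range n, (1 - t ^ α k)) =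
      ∑ k ∈ Finset.range n, Real.log (1 - t ^ α k) :=
    Real.log_prod fun k hk => (hfa k (Finset.mem_range.mp hk)).ne'
  have hlQ : Real.log (∏ k ∈ Finset.range n, (1 - t ^ αs k)) =
      ∑ k ∈ Finset.range n, Real.log (1 - t ^ αs k) :=
    Real.log_prod fun k hk => (hfs k (Finset.mem_range.mp hk)).ne'
  have := Real.exp_le_exp.mpr (hlP ▸ hlQ ▸ hlogsum)
  rwa [Real.exp_log hP, Real.exp_log hQ] at this
end

section
/- Let n ≥ 1, let α > 0, let θ = (θ_1, …, θ_n) and θ* = (θ*_1, …, θ*_n) be n-tuples of positive real numbers each arranged in increasing order with θ majorized by θ*, and let u be a real number with 0 < u < 1. Then ∏_{k=1}^n (u^(θ*_k) (2 − u^(θ*_k)))^α ≤ ∏_{k=1}^n (u^(θ_k) (2 − u^(θ_k)))^α. -/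
open Real Finset

/-- Abel-summation style lemma: if `c` is antitone on `range n`, the partial sums of `d`
are nonpositive and the full sum of `d` is zero, then `∑ c k * d k ≤ 0`. -/
lemma abel_aux_cor31 (n : ℕ) (hn : 1 ≤ n) (c d : ℕ → ℝ)
    (hc : ∀ i j, i ≤ j → j < n → c j ≤ c i)
    (hD : ∀ i, 1 ≤ i → i + 1 ≤ n → ∑ k ∈ Finset.range i, d k ≤ 0)
    (hDn : ∑ k ∈ Finset.range n, d k = 0) :
    ∑ k ∈ Finset.range n, c k * d k ≤ 0 := by
  have key : ∀ m, 1 ≤ m → m ≤ n →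
      ∑ k ∈ Finset.range m, c k * d k ≤ c (m - 1) * ∑ k ∈ Finset.range m, d k := by
    intro m hm
    induction m, hm using Nat.le_induction with
    | base => intro _; simp [Finset.sum_range_one]
    | succ m hm ih =>
      intro hmn
      have h1 := ih (by omega)
      have hDm := hD m hm hmn
      have hcm : c m ≤ c (m - 1) := hc (m - 1) m (by omega) (by omega)
      have h2 : c (m - 1) * ∑ k ∈ Finset.range m, d k ≤
          c m * ∑ k ∈ Finset.range m, d k :=
        mul_le_mul_of_nonpos_right hcm hDm
      rw [Finset.sum_range_succ, Finset.sum_range_succ]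
      have : (m + 1 - 1) = m := by omega
      rw [this]
      nlinarith [h1, h2]
  have := key n hn le_rfl
  rw [hDn] at this
  linarith

/-- Tangent-line inequality for a function with an antitone derivative on `(0, ∞)`. -/
lemma tangent_aux_cor31 (g g' : ℝ → ℝ)
    (hderiv : ∀ t : ℝ, 0 < t → HasDerivAt g (g' t) t)
    (hanti : ∀ x y : ℝ, 0 < x → x ≤ y → g' y ≤ g' x)
    {x y : ℝ} (hx : 0 < x) (hy : 0 < y) :
    g y ≤ g x + g' x * (y - x) := by
  rcases lt_trichotomy x y with hlt | heq | hgt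
  · obtain ⟨c, hc, hceq⟩ := exists_hasDerivAt_eq_slope g g' hlt
      (fun t ht => (hderiv t (lt_of_lt_of_le hx ht.1)).continuousAt.continuousWithinAt)
      (fun t ht => hderiv t (lt_trans hx ht.1))
    have h1 : g y - g x = g' c * (y - x) :=
      (div_eq_iff (sub_ne_zero.mpr hlt.ne')).mp hceq.symm
    have h2 : g' c ≤ g' x := hanti x c hx hc.1.le
    nlinarith [h1, h2, sub_pos.mpr hlt]
  · subst heq; simp
  · obtain ⟨c, hc, hceq⟩ := exists_hasDerivAt_eq_slope g g' hgt
      (fun t ht => (hderiv t (lt_of_lt_of_le hy ht.1)).continuousAt.continuousWithinAt)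
      (fun t ht => hderiv t (lt_trans hy ht.1))
    have h1 : g x - g y = g' c * (x - y) :=
      (div_eq_iff (sub_ne_zero.mpr hgt.ne')).mp hceq.symm
    have h2 : g' x ≤ g' c := hanti c x (lt_trans hy hc.1) hc.2.le
    nlinarith [h1, h2, sub_pos.mpr hgt]

/-- Corollary 3.1 stated pointwise: if the increasing tuple `θ` is majorized by the
increasing tuple `θs` (both with positive entries), then for every `u ∈ (0,1)` and `α > 0`,
`∏ (u^(θs_k)(2 - u^(θs_k)))^α ≤ ∏ (u^(θ_k)(2 - u^(θ_k)))^α`. -/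
theorem prod_cdf_le_of_majorized (n : ℕ) (hn : 1 ≤ n) (α : ℝ) (hα : 0 < α)
    (θ θs : ℕ → ℝ)
    (hθpos : ∀ k < n, 0 < θ k) (hθspos : ∀ k < n, 0 < θs k)
    (hθmono : ∀ i, ∀ j, i ≤ j → j < n → θ i ≤ θ j)
    (hθsmono : ∀ i, ∀ j, i ≤ j → j < n → θs i ≤ θs j)
    (hmaj : ∀ i, 1 ≤ i → i ≤ n - 1 →
      ∑ k ∈ Finset.range i, θs k ≤ ∑ k ∈ Finset.range i, θ k)
    (hsum : ∑ k ∈ Finset.range n, θ k = ∑ k ∈ Finset.range n, θs k)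
    (u : ℝ) (hu0 : 0 < u) (hu1 : u < 1) :
    ∏ k ∈ Finset.range n, (u ^ θs k * (2 - u ^ θs k)) ^ α ≤
      ∏ k ∈ Finset.range n, (u ^ θ k * (2 - u ^ θ k)) ^ α := by
  set L : ℝ := Real.log u with hLdef
  have hL : L < 0 := Real.log_neg hu0 hu1
  set g : ℝ → ℝ := fun t => t * L + Real.log (2 - Real.exp (t * L)) with hgdef
  set g' : ℝ → ℝ := fun t => L + (-(Real.exp (t * L) * L)) / (2 - Real.exp (t * L))
    with hg'def
  -- basic bounds
  have hexp_lt : ∀ t : ℝ, 0 < t → Real.exp (t * L) < 1 := by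
    intro t ht
    exact Real.exp_lt_one_iff.mpr (mul_neg_of_pos_of_neg ht hL)
  have hden_pos : ∀ t : ℝ, 0 < t → 0 < 2 - Real.exp (t * L) := by
    intro t ht; have := hexp_lt t ht; linarith
  -- derivative
  have hderiv : ∀ t : ℝ, 0 < t → HasDerivAt g (g' t) t := by
    intro t ht
    have h1 : HasDerivAt (fun s : ℝ => s * L) L t := hasDerivAt_mul_const L
    have h2 : HasDerivAt (fun s : ℝ => Real.exp (s * L)) (Real.exp (t * L) * L) t :=
      h1.exp
    have h3 : HasDerivAt (fun s : ℝ => 2 - Real.exp (s * L)) (-(Real.exp (t * L) * L)) t :=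
      h2.const_sub 2
    have hne : 2 - Real.exp (t * L) ≠ 0 := ne_of_gt (hden_pos t ht)
    have h4 := h3.log hne
    exact h1.add h4
  -- antitone derivative
  have hanti : ∀ x y : ℝ, 0 < x → x ≤ y → g' y ≤ g' x := by
    intro x y hx hxy
    have hy : 0 < y := lt_of_lt_of_le hx hxy
    set v1 := Real.exp (x * L) with hv1
    set v2 := Real.exp (y * L) with hv2
    have hv : v2 ≤ v1 := Real.exp_le_exp.mpr (mul_le_mul_of_nonpos_right hxy hL.le)
    have hv1pos : 0 < v1 := Real.exp_pos _
    have hv2pos : 0 < v2 := Real.exp_pos _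
    have hv1lt : v1 < 1 := hexp_lt x hx
    have hv2lt : v2 < 1 := hexp_lt y hy
    have hd1 : 0 < 2 - v1 := by linarith
    have hd2 : 0 < 2 - v2 := by linarith
    simp only [hg'def]
    have key : (-(v2 * L)) / (2 - v2) ≤ (-(v1 * L)) / (2 - v1) := by
      rw [div_le_div_iff₀ hd2 hd1]
      nlinarith [hv, hL, hv1pos, hv2pos]
    linarith
  -- sum inequality via tangent lines and Abel summation
  have hsumg : ∑ k ∈ Finset.range n, g (θs k) ≤ ∑ k ∈ Finset.range n, g (θ k) := by
    have step1 : ∑ k ∈ Finset.range n, g (θs k) ≤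
        ∑ k ∈ Finset.range n, (g (θ k) + g' (θ k) * (θs k - θ k)) := by
      apply Finset.sum_le_sum
      intro k hk
      have hk' := Finset.mem_range.mp hk
      exact tangent_aux_cor31 g g' hderiv hanti (hθpos k hk') (hθspos k hk')
    have step2 : ∑ k ∈ Finset.range n, g' (θ k) * (θs k - θ k) ≤ 0 := by
      apply abel_aux_cor31 n hn (fun k => g' (θ k)) (fun k => θs k - θ k)
      · intro i j hij hjn
        exact hanti (θ i) (θ j) (hθpos i (lt_of_le_of_lt hij hjn)) (hθmono i j hij hjn)
      · intro i hi hin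
        rw [Finset.sum_sub_distrib]
        have := hmaj i hi (by omega)
        linarith
      · rw [Finset.sum_sub_distrib]
        linarith [hsum]
    have step1' : ∑ k ∈ Finset.range n, g (θs k) ≤
        ∑ k ∈ Finset.range n, g (θ k) +
          ∑ k ∈ Finset.range n, g' (θ k) * (θs k - θ k) := by
      rw [← Finset.sum_add_distrib]; exact step1
    linarith
  -- convert factors to exponentials
  have hfact : ∀ (t : ℝ), 0 < t →
      (u ^ t * (2 - u ^ t)) ^ α = Real.exp (g t * α) := by
    intro t ht
    have hut : u ^ t = Real.exp (t * L) := by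
      rw [Real.rpow_def_of_pos hu0, mul_comm]
    have hutpos : 0 < u ^ t := by rw [hut]; exact Real.exp_pos _
    have hd : 0 < 2 - u ^ t := by rw [hut]; exact hden_pos t ht
    have hppos : 0 < u ^ t * (2 - u ^ t) := mul_pos hutpos hd
    rw [Real.rpow_def_of_pos hppos]
    congr 1
    rw [Real.log_mul (ne_of_gt hutpos) (ne_of_gt hd)]
    congr 2
    · rw [hut, Real.log_exp]
    · rw [hut]
  have hprod : ∀ (f : ℕ → ℝ), (∀ k < n, 0 < f k) →
      ∏ k ∈ Finset.range n, (u ^ f k * (2 - u ^ f k)) ^ α =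
        Real.exp (∑ k ∈ Finset.range n, g (f k) * α) := by
    intro f hf
    rw [Real.exp_sum]
    apply Finset.prod_congr rfl
    intro k hk
    exact hfact (f k) (hf k (Finset.mem_range.mp hk))
  rw [hprod θs hθspos, hprod θ hθpos]
  apply Real.exp_le_exp.mpr
  rw [← Finset.sum_mul, ← Finset.sum_mul]
  exact mul_le_mul_of_nonneg_right hsumg hα.le
end

section
/- Let n ≥ 1, let α > 0, let θ = (θ_1, …, θ_n) and θ* = (θ*_1, …, θ*_n) be n-tuples of positive real numbers each arranged in increasing order with θ weakly submajorized by θ*, and let u be a real number with 0 < u < 1. Then ∏_{k=1}^n (u^(θ*_k) (2 − u^(θ*_k)))^α ≤ ∏_{k=1}^n (u^(θ_k) (2 − u^(θ_k)))^α. -/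
noncomputable def TLE (u t : ℝ) : ℝ := Real.exp (Real.log u * t)
noncomputable def TLg (u t : ℝ) : ℝ := (-Real.log u) * t - Real.log (2 - TLE u t)
noncomputable def TLG (u t : ℝ) : ℝ := (-Real.log u) * (2 - 2 * TLE u t) / (2 - TLE u t)

lemma TLE_pos (u t : ℝ) : 0 < TLE u t := Real.exp_pos _

lemma TLE_le_one {u : ℝ} (hu0 : 0 < u) (hu1 : u < 1) {t : ℝ} (ht : 0 ≤ t) : TLE u t ≤ 1 := by
  have hlog : Real.log u < 0 := Real.log_neg hu0 hu1
  have : Real.log u * t ≤ 0 := mul_nonpos_of_nonpos_of_nonneg hlog.le ht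
  simpa [TLE] using Real.exp_le_one_iff.mpr this

lemma TLE_anti {u : ℝ} (hu0 : 0 < u) (hu1 : u < 1) {x y : ℝ} (hxy : x ≤ y) :
    TLE u y ≤ TLE u x := by
  have hlog : Real.log u < 0 := Real.log_neg hu0 hu1
  have : Real.log u * y ≤ Real.log u * x := mul_le_mul_of_nonpos_left hxy hlog.le
  exact Real.exp_le_exp.mpr this

lemma TLG_mono {u : ℝ} (hu0 : 0 < u) (hu1 : u < 1) {x y : ℝ} (hx : 0 ≤ x) (hxy : x ≤ y) :
    TLG u x ≤ TLG u y := by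
  have hlog : Real.log u < 0 := Real.log_neg hu0 hu1
  have ha1 : TLE u x ≤ 1 := TLE_le_one hu0 hu1 hx
  have hb1 : TLE u y ≤ 1 := TLE_le_one hu0 hu1 (hx.trans hxy)
  have hba : TLE u y ≤ TLE u x := TLE_anti hu0 hu1 hxy
  have hbpos : 0 < TLE u y := TLE_pos u y
  have hax : (0:ℝ) < 2 - TLE u x := by linarith
  have hay : (0:ℝ) < 2 - TLE u y := by linarith
  unfold TLG
  rw [div_le_div_iff₀ hax hay]
  nlinarith [TLE_pos u x]

lemma TLG_nonneg {u : ℝ} (hu0 : 0 < u) (hu1 : u < 1) {t : ℝ} (ht : 0 ≤ t) : 0 ≤ TLG u t := by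
  have hlog : Real.log u < 0 := Real.log_neg hu0 hu1
  have h1 : TLE u t ≤ 1 := TLE_le_one hu0 hu1 ht
  apply div_nonneg (mul_nonneg (by linarith) (by linarith)) (by linarith)

lemma TL_hasDerivAt_g {u : ℝ} (hu0 : 0 < u) {t : ℝ} (ht : TLE u t < 2) :
    HasDerivAt (TLg u) (TLG u t) t := by
  have hE : HasDerivAt (fun t => TLE u t) (Real.log u * TLE u t) t := by
    have h1 : HasDerivAt (fun t : ℝ => Real.log u * t) (Real.log u) t := by
      simpa using (hasDerivAt_id t).const_mul (Real.log u)
    simpa [TLE, mul_comm] using h1.exp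
  have h2 : HasDerivAt (fun t => 2 - TLE u t) (-(Real.log u * TLE u t)) t :=
    by have h := (hasDerivAt_const t (2:ℝ)).sub hE; simp only [zero_sub] at h; exact h
  have hne : 2 - TLE u t ≠ 0 := by linarith
  have h3 := h2.log hne
  have h4 : HasDerivAt (fun t : ℝ => (-Real.log u) * t) (-Real.log u) t := by
    simpa using (hasDerivAt_id t).const_mul (-Real.log u)
  have h5 := h4.sub h3
  refine h5.congr_deriv ?_
  unfold TLG
  field_simp
  ring

lemma TL_subgrad {u : ℝ} (hu0 : 0 < u) (hu1 : u < 1) {x y : ℝ} (hx : 0 < x) (hy : 0 ≤ y) :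
    TLG u x * (y - x) ≤ TLg u y - TLg u x := by
  have hdiff : ∀ t : ℝ, 0 ≤ t → HasDerivAt (TLg u) (TLG u t) t := fun t ht =>
    TL_hasDerivAt_g hu0 (lt_of_le_of_lt (TLE_le_one hu0 hu1 ht) one_lt_two)
  rcases le_total x y with h | h
  · have hcont : ContinuousOn (TLg u) (Set.Ici x) := fun t ht =>
      ((hdiff t (hx.le.trans ht)).continuousAt).continuousWithinAt
    have hd : DifferentiableOn ℝ (TLg u) (interior (Set.Ici x)) := by
      rw [interior_Ici]
      exact fun t ht => ((hdiff t (hx.le.trans (le_of_lt ht))).differentiableAt).differentiableWithinAt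
    have hbound : ∀ z ∈ interior (Set.Ici x), TLG u x ≤ deriv (TLg u) z := by
      rw [interior_Ici]
      intro z hz
      rw [(hdiff z (hx.le.trans (le_of_lt hz))).deriv]
      exact TLG_mono hu0 hu1 hx.le (le_of_lt hz)
    exact (convex_Ici x).mul_sub_le_image_sub_of_le_deriv hcont hd hbound x Set.self_mem_Ici
      y h h
  · have hcont : ContinuousOn (TLg u) (Set.Icc y x) := fun t ht =>
      ((hdiff t (hy.trans ht.1)).continuousAt).continuousWithinAt
    have hd : DifferentiableOn ℝ (TLg u) (interior (Set.Icc y x)) := by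
      rw [interior_Icc]
      exact fun t ht => ((hdiff t (hy.trans (le_of_lt ht.1))).differentiableAt).differentiableWithinAt
    have hbound : ∀ z ∈ interior (Set.Icc y x), deriv (TLg u) z ≤ TLG u x := by
      rw [interior_Icc]
      intro z hz
      rw [(hdiff z (hy.trans (le_of_lt hz.1))).deriv]
      exact TLG_mono hu0 hu1 (hy.trans (le_of_lt hz.1)) hz.2.le
    have := (convex_Icc y x).image_sub_le_mul_sub_of_deriv_le hcont hd hbound y
      (Set.left_mem_Icc.mpr h) x (Set.right_mem_Icc.mpr h) h
    nlinarith

lemma TL_abel (C d : ℕ → ℝ) (n : ℕ)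
    (hmono : ∀ i j, i ≤ j → j < n → C i ≤ C j)
    (hD : ∀ i, i ≤ n → 0 ≤ ∑ k ∈ Finset.Ico i n, d k) :
    ∀ m i, i ≤ n → n - i = m →
      C i * (∑ k ∈ Finset.Ico i n, d k) ≤ ∑ k ∈ Finset.Ico i n, C k * d k := by
  intro m
  induction m with
  | zero =>
    intro i hi hm
    have : i = n := by omega
    subst this; simp
  | succ m ih =>
    intro i hi hm
    have hin : i < n := by omega
    rw [Finset.sum_eq_sum_Ico_succ_bot hin, Finset.sum_eq_sum_Ico_succ_bot hin
      (f := fun k => C k * d k)]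
    have h1 := ih (i + 1) (by omega) (by omega)
    have hD1 := hD (i + 1) (by omega)
    have hCC : C i * (∑ k ∈ Finset.Ico (i + 1) n, d k) ≤
        C (i + 1) * (∑ k ∈ Finset.Ico (i + 1) n, d k) := by
      rcases eq_or_lt_of_le (Nat.succ_le_of_lt hin) with h | h
      · simp [← h]
      · exact mul_le_mul_of_nonneg_right (hmono i (i + 1) (by omega) h) hD1
    rw [mul_add]
    linarith

/-- Theorem 3.2 stated pointwise: if the increasing tuple `θ` is weakly submajorized by the
increasing tuple `θs` (both with positive entries), then for every `u ∈ (0,1)` and `α > 0`,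
`∏ (u^(θs_k)(2 - u^(θs_k)))^α ≤ ∏ (u^(θ_k)(2 - u^(θ_k)))^α`. -/
theorem prod_cdf_le_of_weakly_submajorized (n : ℕ) (hn : 1 ≤ n) (α : ℝ) (hα : 0 < α)
    (θ θs : ℕ → ℝ)
    (hθpos : ∀ k < n, 0 < θ k) (hθspos : ∀ k < n, 0 < θs k)
    (hθmono : ∀ i, ∀ j, i ≤ j → j < n → θ i ≤ θ j)
    (hθsmono : ∀ i, ∀ j, i ≤ j → j < n → θs i ≤ θs j)
    (hsubmaj : ∀ i < n, ∑ k ∈ Finset.Ico i n, θ k ≤ ∑ k ∈ Finset.Ico i n, θs k)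
    (u : ℝ) (hu0 : 0 < u) (hu1 : u < 1) :
    ∏ k ∈ Finset.range n, (u ^ θs k * (2 - u ^ θs k)) ^ α ≤
      ∏ k ∈ Finset.range n, (u ^ θ k * (2 - u ^ θ k)) ^ α := by
  -- rpow equals TLE
  have hrpow : ∀ t : ℝ, u ^ t = TLE u t := fun t => Real.rpow_def_of_pos hu0 t
  -- log of the factor is -TLg
  have hlogφ : ∀ t : ℝ, 0 ≤ t → Real.log (u ^ t * (2 - u ^ t)) = -(TLg u t) := by
    intro t ht
    have hE1 : TLE u t ≤ 1 := TLE_le_one hu0 hu1 ht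
    have hEpos : 0 < TLE u t := TLE_pos u t
    rw [hrpow t, Real.log_mul (ne_of_gt hEpos) (by linarith), TLg, TLE, Real.log_exp]
    ring
  -- positivity of factors
  have hφpos : ∀ t : ℝ, 0 ≤ t → 0 < u ^ t * (2 - u ^ t) := by
    intro t ht
    rw [hrpow t]
    have hE1 : TLE u t ≤ 1 := TLE_le_one hu0 hu1 ht
    exact mul_pos (TLE_pos u t) (by linarith)
  -- the sum inequality via subgradient + Abel
  have key : ∑ k ∈ Finset.range n, TLg u (θ k) ≤ ∑ k ∈ Finset.range n, TLg u (θs k) := by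
    have hsub : ∀ k ∈ Finset.range n,
        TLG u (θ k) * (θs k - θ k) ≤ TLg u (θs k) - TLg u (θ k) := by
      intro k hk
      have hk' := Finset.mem_range.mp hk
      exact TL_subgrad hu0 hu1 (hθpos k hk') (hθspos k hk').le
    have habel := TL_abel (fun k => TLG u (θ k)) (fun k => θs k - θ k) n
      (fun i j hij hj => TLG_mono hu0 hu1 (hθpos i (lt_of_le_of_lt hij hj)).le
        (hθmono i j hij hj))
      (by
        intro i hi
        rcases eq_or_lt_of_le hi with h | h
        · simp [h]
        · have := hsubmaj i h
          rw [Finset.sum_sub_distrib]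
          linarith)
      (n - 0) 0 (Nat.zero_le n) rfl
    have hD0 : 0 ≤ ∑ k ∈ Finset.Ico 0 n, (θs k - θ k) := by
      have := hsubmaj 0 hn
      rw [Finset.sum_sub_distrib]
      linarith
    have hC0 : 0 ≤ TLG u (θ 0) := TLG_nonneg hu0 hu1 (hθpos 0 hn).le
    have h0 : (0:ℝ) ≤ ∑ k ∈ Finset.Ico 0 n, TLG u (θ k) * (θs k - θ k) :=
      le_trans (mul_nonneg hC0 hD0) habel
    have h1 : ∑ k ∈ Finset.range n, TLG u (θ k) * (θs k - θ k) ≤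
        ∑ k ∈ Finset.range n, (TLg u (θs k) - TLg u (θ k)) :=
      Finset.sum_le_sum hsub
    rw [Finset.range_eq_Ico] at h1 ⊢
    rw [Finset.sum_sub_distrib] at h1
    linarith
  -- exponentiate
  have hprod : ∀ (φ : ℕ → ℝ), (∀ k < n, 0 < φ k) →
      ∏ k ∈ Finset.range n, (φ k) ^ α =
        Real.exp (∑ k ∈ Finset.range n, Real.log (φ k) * α) := by
    intro φ hφ
    rw [Real.exp_sum]
    exact Finset.prod_congr rfl fun k hk =>
      Real.rpow_def_of_pos (hφ k (Finset.mem_range.mp hk)) α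
  rw [hprod _ (fun k hk => hφpos (θs k) (hθspos k hk).le),
      hprod _ (fun k hk => hφpos (θ k) (hθpos k hk).le)]
  apply Real.exp_le_exp.mpr
  rw [← Finset.sum_mul, ← Finset.sum_mul]
  apply mul_le_mul_of_nonneg_right _ hα.le
  calc ∑ k ∈ Finset.range n, Real.log (u ^ θs k * (2 - u ^ θs k))
      = ∑ k ∈ Finset.range n, -(TLg u (θs k)) :=
        Finset.sum_congr rfl fun k hk => hlogφ (θs k) (hθspos k (Finset.mem_range.mp hk)).le
    _ ≤ ∑ k ∈ Finset.range n, -(TLg u (θ k)) := by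
        rw [Finset.sum_neg_distrib, Finset.sum_neg_distrib]
        exact neg_le_neg key
    _ = ∑ k ∈ Finset.range n, Real.log (u ^ θ k * (2 - u ^ θ k)) :=
        (Finset.sum_congr rfl fun k hk => (hlogφ (θ k) (hθpos k (Finset.mem_range.mp hk)).le)).symm
end

section
/- Let n ≥ 1, let α > 0, let θ_1, …, θ_n and θ*_1, …, θ*_n be positive real numbers with θ_k ≤ θ*_k for every k = 1, …, n, and let u be a real number with 0 < u < 1. Then ∏_{k=1}^n (u^(θ*_k) (2 − u^(θ*_k)))^α ≤ ∏_{k=1}^n (u^(θ_k) (2 − u^(θ_k)))^α. -/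
/-- Theorem 3.3 stated pointwise: componentwise domination `θ_k ≤ θs_k` of positive scale
parameters implies `∏ (u^(θs_k)(2 - u^(θs_k)))^α ≤ ∏ (u^(θ_k)(2 - u^(θ_k)))^α` for
`u ∈ (0,1)` and `α > 0`. -/
theorem prod_cdf_le_of_le (n : ℕ) (hn : 1 ≤ n) (α : ℝ) (hα : 0 < α)
    (θ θs : ℕ → ℝ)
    (hθpos : ∀ k < n, 0 < θ k) (hθspos : ∀ k < n, 0 < θs k)
    (hle : ∀ k < n, θ k ≤ θs k)
    (u : ℝ) (hu0 : 0 < u) (hu1 : u < 1) :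
    ∏ k ∈ Finset.range n, (u ^ θs k * (2 - u ^ θs k)) ^ α ≤
      ∏ k ∈ Finset.range n, (u ^ θ k * (2 - u ^ θ k)) ^ α := by
  apply Finset.prod_le_prod
  · intro k hk
    have hk' := Finset.mem_range.mp hk
    have ha : 0 < u ^ θs k := Real.rpow_pos_of_pos hu0 _
    have ha1 : u ^ θs k < 1 := Real.rpow_lt_one hu0.le hu1 (hθspos k hk')
    exact Real.rpow_nonneg (by nlinarith) _
  · intro k hk
    have hk' := Finset.mem_range.mp hk
    have ha : 0 < u ^ θs k := Real.rpow_pos_of_pos hu0 _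
    have hb : 0 < u ^ θ k := Real.rpow_pos_of_pos hu0 _
    have ha1 : u ^ θs k < 1 := Real.rpow_lt_one hu0.le hu1 (hθspos k hk')
    have hb1 : u ^ θ k < 1 := Real.rpow_lt_one hu0.le hu1 (hθpos k hk')
    have hab : u ^ θs k ≤ u ^ θ k :=
      Real.rpow_le_rpow_of_exponent_ge hu0 hu1.le (hle k hk')
    apply Real.rpow_le_rpow (by nlinarith) (by nlinarith) hα.le
end

section
/- Let n ≥ 1, let θ > 0, let α = (α_1, …, α_n) and α* = (α*_1, …, α*_n) be n-tuples of positive real numbers each arranged in increasing order with α* majorized by α, and let u_1, u_2 be real numbers with 0 ≤ u_2 ≤ u_1 ≤ 1. Then ∏_{k=1}^n [1 − (u_1^θ (2 − u_1^θ))^(α_k)] ≤ ∏_{k=1}^n [1 − (u_2^θ (2 − u_2^θ))^(α*_k)]. -/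
open Real Finset

noncomputable def cslope (t a : ℝ) : ℝ := -(t ^ a * Real.log t) / (1 - t ^ a)

lemma gderiv {t : ℝ} (ht0 : 0 < t) (ht1 : t < 1) {a : ℝ} (ha : 0 < a) :
    HasDerivAt (fun a => Real.log (1 - t ^ a)) (cslope t a) a := by
  have h1 : t ^ a < 1 := Real.rpow_lt_one ht0.le ht1 ha
  have h : HasDerivAt (fun a : ℝ => 1 - t ^ a) (-(t ^ a * Real.log t)) a := by
    simpa using ((Real.hasStrictDerivAt_const_rpow ht0 a).hasDerivAt).const_sub 1
  exact h.log (by linarith)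

lemma cslope_anti {t : ℝ} (ht0 : 0 < t) (ht1 : t < 1) {a b : ℝ} (ha : 0 < a) (hab : a ≤ b) :
    cslope t b ≤ cslope t a := by
  have hb : 0 < b := lt_of_lt_of_le ha hab
  have hta : t ^ a < 1 := Real.rpow_lt_one ht0.le ht1 ha
  have htb : t ^ b < 1 := Real.rpow_lt_one ht0.le ht1 hb
  have htb0 : 0 < t ^ b := Real.rpow_pos_of_pos ht0 b
  have hba : t ^ b ≤ t ^ a := Real.rpow_le_rpow_of_exponent_ge ht0 ht1.le hab
  have hlog : Real.log t < 0 := Real.log_neg ht0 ht1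
  have key : t ^ b / (1 - t ^ b) ≤ t ^ a / (1 - t ^ a) :=
    div_le_div₀ (Real.rpow_pos_of_pos ht0 a).le hba (by linarith) (by linarith)
  have : (-Real.log t) * (t ^ b / (1 - t ^ b)) ≤ (-Real.log t) * (t ^ a / (1 - t ^ a)) :=
    mul_le_mul_of_nonneg_left key (by linarith)
  calc cslope t b = (-Real.log t) * (t ^ b / (1 - t ^ b)) := by unfold cslope; ring
    _ ≤ (-Real.log t) * (t ^ a / (1 - t ^ a)) := this
    _ = cslope t a := by unfold cslope; ring

lemma tangent_bound {t : ℝ} (ht0 : 0 < t) (ht1 : t < 1) {x y : ℝ} (hx : 0 < x) (hy : 0 < y) :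
    Real.log (1 - t ^ x) - Real.log (1 - t ^ y) ≤ cslope t y * (x - y) := by
  set g : ℝ → ℝ := fun a => Real.log (1 - t ^ a) with hg
  rcases lt_trichotomy x y with h | h | h
  · -- x < y : MVT on [x,y]
    obtain ⟨ξ, hξ, hslope⟩ := exists_hasDerivAt_eq_slope g (fun a => cslope t a) h
      (fun z hz => (gderiv ht0 ht1 (lt_of_lt_of_le hx hz.1)).continuousAt.continuousWithinAt)
      (fun z hz => gderiv ht0 ht1 (lt_trans hx hz.1))
    have hc : cslope t y ≤ cslope t ξ := cslope_anti ht0 ht1 (lt_trans hx hξ.1) hξ.2.le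
    have h1 : cslope t ξ * (y - x) = g y - g x :=
      (eq_div_iff (sub_ne_zero.mpr h.ne')).mp hslope
    nlinarith [h1, hc, sub_pos.mpr h]
  · simp [h]
  · -- y < x : MVT on [y,x]
    obtain ⟨ξ, hξ, hslope⟩ := exists_hasDerivAt_eq_slope g (fun a => cslope t a) h
      (fun z hz => (gderiv ht0 ht1 (lt_of_lt_of_le hy hz.1)).continuousAt.continuousWithinAt)
      (fun z hz => gderiv ht0 ht1 (lt_trans hy hz.1))
    have hc : cslope t ξ ≤ cslope t y := cslope_anti ht0 ht1 hy hξ.1.le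
    have h1 : cslope t ξ * (x - y) = g x - g y :=
      (eq_div_iff (sub_ne_zero.mpr h.ne')).mp hslope
    nlinarith [h1, hc, sub_pos.mpr h]

lemma abel_nonneg {t : ℝ} (ht0 : 0 < t) (ht1 : t < 1) (n : ℕ)
    (α αs : ℕ → ℝ) (hαspos : ∀ k < n, 0 < αs k)
    (hαsmono : ∀ i, ∀ j, i ≤ j → j < n → αs i ≤ αs j)
    (hmaj : ∀ i, 1 ≤ i → i ≤ n - 1 →
      ∑ k ∈ Finset.range i, α k ≤ ∑ k ∈ Finset.range i, αs k)
    (hsum : ∑ k ∈ Finset.range n, αs k = ∑ k ∈ Finset.range n, α k) :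
    0 ≤ ∑ k ∈ Finset.range n, cslope t (αs k) * (αs k - α k) := by
  have hparts := Finset.sum_range_by_parts (fun k => cslope t (αs k))
    (fun k => αs k - α k) n
  simp only [smul_eq_mul] at hparts
  have hDn : ∑ i ∈ Finset.range n, (αs i - α i) = 0 := by
    rw [Finset.sum_sub_distrib, hsum, sub_self]
  rw [hparts, hDn, mul_zero, zero_sub, neg_nonneg]
  apply Finset.sum_nonpos
  intro i hi
  rw [Finset.mem_range] at hi
  have hi1 : i + 1 ≤ n - 1 := by omega
  have hin : i + 1 < n := by omega
  have hD : 0 ≤ ∑ k ∈ Finset.range (i + 1), (αs k - α k) := by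
    rw [Finset.sum_sub_distrib, sub_nonneg]
    exact hmaj (i + 1) (by omega) hi1
  have hc : cslope t (αs (i + 1)) - cslope t (αs i) ≤ 0 := by
    have := cslope_anti ht0 ht1 (hαspos i (by omega)) (hαsmono i (i + 1) (by omega) hin)
    linarith
  exact mul_nonpos_of_nonpos_of_nonneg hc hD

lemma schur_step (n : ℕ) (hn : 1 ≤ n) {t : ℝ} (ht0 : 0 ≤ t) (ht1 : t ≤ 1)
    (α αs : ℕ → ℝ)
    (hαpos : ∀ k < n, 0 < α k) (hαspos : ∀ k < n, 0 < αs k)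
    (hαsmono : ∀ i, ∀ j, i ≤ j → j < n → αs i ≤ αs j)
    (hmaj : ∀ i, 1 ≤ i → i ≤ n - 1 →
      ∑ k ∈ Finset.range i, α k ≤ ∑ k ∈ Finset.range i, αs k)
    (hsum : ∑ k ∈ Finset.range n, αs k = ∑ k ∈ Finset.range n, α k) :
    ∏ k ∈ Finset.range n, (1 - t ^ α k) ≤ ∏ k ∈ Finset.range n, (1 - t ^ αs k) := by
  rcases eq_or_lt_of_le ht0 with h0 | h0
  · -- t = 0 : both products are 1
    rw [← h0]
    have e1 : ∏ k ∈ Finset.range n, (1 - (0:ℝ) ^ α k) = 1 :=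
      Finset.prod_eq_one fun k hk => by
        rw [Real.zero_rpow (hαpos k (Finset.mem_range.mp hk)).ne', sub_zero]
    have e2 : ∏ k ∈ Finset.range n, (1 - (0:ℝ) ^ αs k) = 1 :=
      Finset.prod_eq_one fun k hk => by
        rw [Real.zero_rpow (hαspos k (Finset.mem_range.mp hk)).ne', sub_zero]
    rw [e1, e2]
  rcases eq_or_lt_of_le ht1 with h1 | h1
  · -- t = 1 : both products are 0
    subst h1
    have h0n : (0 : ℕ) ∈ Finset.range n := Finset.mem_range.mpr hn
    rw [Finset.prod_eq_zero h0n (by rw [Real.one_rpow]; ring),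
      Finset.prod_eq_zero h0n (by rw [Real.one_rpow]; ring)]
  · -- 0 < t < 1
    have hpos1 : ∀ k ∈ Finset.range n, 0 < 1 - t ^ α k := fun k hk => by
      have := Real.rpow_lt_one ht0 h1 (hαpos k (Finset.mem_range.mp hk))
      linarith
    have hpos2 : ∀ k ∈ Finset.range n, 0 < 1 - t ^ αs k := fun k hk => by
      have := Real.rpow_lt_one ht0 h1 (hαspos k (Finset.mem_range.mp hk))
      linarith
    rw [Finset.prod_congr rfl (fun k hk => (Real.exp_log (hpos1 k hk)).symm),
      Finset.prod_congr rfl (fun k hk => (Real.exp_log (hpos2 k hk)).symm),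
      ← Real.exp_sum, ← Real.exp_sum, Real.exp_le_exp]
    have key : ∀ k ∈ Finset.range n,
        Real.log (1 - t ^ α k) - Real.log (1 - t ^ αs k) ≤
          cslope t (αs k) * (α k - αs k) := fun k hk =>
      tangent_bound h0 h1 (hαpos k (Finset.mem_range.mp hk))
        (hαspos k (Finset.mem_range.mp hk))
    have h2 : ∑ k ∈ Finset.range n,
        (Real.log (1 - t ^ α k) - Real.log (1 - t ^ αs k)) ≤
        ∑ k ∈ Finset.range n, cslope t (αs k) * (α k - αs k) :=
      Finset.sum_le_sum key
    have h3 : ∑ k ∈ Finset.range n, cslope t (αs k) * (α k - αs k) ≤ 0 := by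
      have := abel_nonneg h0 h1 n α αs hαspos hαsmono hmaj hsum
      have heq : ∑ k ∈ Finset.range n, cslope t (αs k) * (α k - αs k) =
          -∑ k ∈ Finset.range n, cslope t (αs k) * (αs k - α k) := by
        rw [← Finset.sum_neg_distrib]
        exact Finset.sum_congr rfl fun k _ => by ring
      rw [heq]; linarith
    rw [Finset.sum_sub_distrib] at h2
    linarith


/-- Theorem 3.5 stated pointwise: if the increasing tuple `αs` is majorized by the increasing
tuple `α` (both positive), `θ > 0` and `0 ≤ u₂ ≤ u₁ ≤ 1`, then
`∏ (1 - (u₁^θ(2-u₁^θ))^(α_k)) ≤ ∏ (1 - (u₂^θ(2-u₂^θ))^(αs_k))`. -/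
theorem series_st_order_pointwise (n : ℕ) (hn : 1 ≤ n) (θ : ℝ) (hθ : 0 < θ)
    (α αs : ℕ → ℝ)
    (hαpos : ∀ k < n, 0 < α k) (hαspos : ∀ k < n, 0 < αs k)
    (hαmono : ∀ i, ∀ j, i ≤ j → j < n → α i ≤ α j)
    (hαsmono : ∀ i, ∀ j, i ≤ j → j < n → αs i ≤ αs j)
    (hmaj : ∀ i, 1 ≤ i → i ≤ n - 1 →
      ∑ k ∈ Finset.range i, α k ≤ ∑ k ∈ Finset.range i, αs k)
    (hsum : ∑ k ∈ Finset.range n, αs k = ∑ k ∈ Finset.range n, α k)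
    (u₁ u₂ : ℝ) (hu2 : 0 ≤ u₂) (hu21 : u₂ ≤ u₁) (hu1 : u₁ ≤ 1) :
    ∏ k ∈ Finset.range n, (1 - (u₁ ^ θ * (2 - u₁ ^ θ)) ^ α k) ≤
      ∏ k ∈ Finset.range n, (1 - (u₂ ^ θ * (2 - u₂ ^ θ)) ^ αs k) := by
  set s₁ := u₁ ^ θ with hs₁
  set s₂ := u₂ ^ θ with hs₂
  have hs₂0 : 0 ≤ s₂ := Real.rpow_nonneg hu2 θ
  have hs21 : s₂ ≤ s₁ := Real.rpow_le_rpow hu2 hu21 hθ.le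
  have hs₁1 : s₁ ≤ 1 := Real.rpow_le_one (le_trans hu2 hu21) hu1 hθ.le
  set t₁ := s₁ * (2 - s₁) with ht₁
  set t₂ := s₂ * (2 - s₂) with ht₂
  have ht₂0 : 0 ≤ t₂ := mul_nonneg hs₂0 (by nlinarith)
  have ht21 : t₂ ≤ t₁ := by nlinarith
  have ht₁1 : t₁ ≤ 1 := by nlinarith [sq_nonneg (1 - s₁)]
  have ht₂1 : t₂ ≤ 1 := le_trans ht21 ht₁1
  have step1 : ∏ k ∈ Finset.range n, (1 - t₁ ^ α k) ≤
      ∏ k ∈ Finset.range n, (1 - t₂ ^ α k) := by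
    apply Finset.prod_le_prod
    · intro k hk
      have := Real.rpow_le_one (le_trans ht₂0 ht21) ht₁1
        (hαpos k (Finset.mem_range.mp hk)).le
      linarith
    · intro k hk
      have := Real.rpow_le_rpow ht₂0 ht21 (hαpos k (Finset.mem_range.mp hk)).le
      linarith
  exact le_trans step1
    (schur_step n hn ht₂0 ht₂1 α αs hαpos hαspos hαsmono hmaj hsum)
end

section
/- Let n ≥ 1, let α > 0, let θ = (θ_1, …, θ_n) and θ* = (θ*_1, …, θ*_n) be n-tuples of positive real numbers each arranged in increasing order with θ weakly submajorized by θ*, and let u_1, u_2 be real numbers with 0 < u_2 ≤ u_1 < 1. Then ∏_{k=1}^n (u_2^(θ*_k) (2 − u_2^(θ*_k)))^α ≤ ∏_{k=1}^n (u_1^(θ_k) (2 − u_1^(θ_k)))^α. -/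
/-- Tangent-line inequality for `t ↦ t + log(2 - exp t)` (concave, so graph below tangent). -/
lemma tangent_aux (A B : ℝ) (hA : A < 0) (hB : B < 0) :
    B + Real.log (2 - Real.exp B) ≤
      A + Real.log (2 - Real.exp A) +
        (B - A) * ((2 - 2 * Real.exp A) / (2 - Real.exp A)) := by
  have hxA : Real.exp A < 1 := Real.exp_lt_one_iff.mpr hA
  have hxB : Real.exp B < 1 := Real.exp_lt_one_iff.mpr hB
  have hpA := Real.exp_pos A
  have hpB := Real.exp_pos B
  have h2A : 0 < 2 - Real.exp A := by linarith
  have h2B : 0 < 2 - Real.exp B := by linarith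
  have hlog : Real.log (2 - Real.exp B) - Real.log (2 - Real.exp A) ≤
      (Real.exp A - Real.exp B) / (2 - Real.exp A) := by
    rw [← Real.log_div (ne_of_gt h2B) (ne_of_gt h2A)]
    have h := Real.log_le_sub_one_of_pos (div_pos h2B h2A)
    have : (2 - Real.exp B) / (2 - Real.exp A) - 1 =
        (Real.exp A - Real.exp B) / (2 - Real.exp A) := by
      field_simp
      ring
    linarith [this ▸ h]
  have hexp : Real.exp A - Real.exp B ≤ Real.exp A * (A - B) := by
    have h1 : (B - A) + 1 ≤ Real.exp (B - A) := Real.add_one_le_exp _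
    have h2 : Real.exp B = Real.exp A * Real.exp (B - A) := by
      rw [← Real.exp_add]; ring_nf
    nlinarith [hpA]
  have hdiv : (Real.exp A - Real.exp B) / (2 - Real.exp A) ≤
      Real.exp A * (A - B) / (2 - Real.exp A) := by gcongr
  have hid : A + (B - A) * ((2 - 2 * Real.exp A) / (2 - Real.exp A)) =
      B + Real.exp A * (A - B) / (2 - Real.exp A) := by
    field_simp; ring
  linarith

/-- Abel summation: if `c` is nonnegative and nondecreasing on `[0,n)` and all tail
sums of `d` are nonnegative, then `∑ c k * d k ≥ 0`. -/
lemma abel_nonneg_s11 (n : ℕ) (c d : ℕ → ℝ)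
    (hc0 : ∀ k < n, 0 ≤ c k)
    (hcmono : ∀ i j, i ≤ j → j < n → c i ≤ c j)
    (hd : ∀ i < n, 0 ≤ ∑ k ∈ Finset.Ico i n, d k) :
    0 ≤ ∑ k ∈ Finset.range n, c k * d k := by
  have key : ∀ m i, i + m = n →
      c i * (∑ k ∈ Finset.Ico i n, d k) ≤ ∑ k ∈ Finset.Ico i n, c k * d k := by
    intro m
    induction m with
    | zero => intro i hi; subst hi; simp
    | succ m ih =>
        intro i hi
        have hin : i < n := by omega
        rw [Finset.sum_eq_sum_Ico_succ_bot hin d, Finset.sum_eq_sum_Ico_succ_bot hin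
          (fun k => c k * d k)]
        have ih' := ih (i + 1) (by omega)
        have hD : 0 ≤ ∑ k ∈ Finset.Ico (i + 1) n, d k := by
          rcases Nat.lt_or_ge (i + 1) n with h | h
          · exact hd _ h
          · have : Finset.Ico (i + 1) n = ∅ := Finset.Ico_eq_empty (by omega)
            simp [this]
        have hstep : c i * (∑ k ∈ Finset.Ico (i + 1) n, d k) ≤
            c (i + 1) * (∑ k ∈ Finset.Ico (i + 1) n, d k) := by
          rcases Nat.lt_or_ge (i + 1) n with h | h
          · exact mul_le_mul_of_nonneg_right (hcmono i (i + 1) (by omega) h) hD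
          · have : Finset.Ico (i + 1) n = ∅ := Finset.Ico_eq_empty (by omega)
            simp [this]
        calc c i * (d i + ∑ k ∈ Finset.Ico (i + 1) n, d k)
            = c i * d i + c i * (∑ k ∈ Finset.Ico (i + 1) n, d k) := by ring
          _ ≤ c i * d i + c (i + 1) * (∑ k ∈ Finset.Ico (i + 1) n, d k) := by linarith
          _ ≤ c i * d i + ∑ k ∈ Finset.Ico (i + 1) n, c k * d k := by linarith
  rcases Nat.eq_zero_or_pos n with h | h
  · simp [h]
  · have h0 := key n 0 (by omega)
    rw [Finset.range_eq_Ico]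
    have : 0 ≤ c 0 * (∑ k ∈ Finset.Ico 0 n, d k) :=
      mul_nonneg (hc0 0 h) (hd 0 h)
    linarith

/-- Theorem 3.6(i) stated pointwise: if the increasing tuple `θ` is weakly submajorized by
the increasing tuple `θs` (both positive), `α > 0` and `0 < u₂ ≤ u₁ < 1`, then
`∏ (u₂^(θs_k)(2-u₂^(θs_k)))^α ≤ ∏ (u₁^(θ_k)(2-u₁^(θ_k)))^α`. -/
theorem parallel_st_order_submaj_pointwise (n : ℕ) (hn : 1 ≤ n) (α : ℝ) (hα : 0 < α)
    (θ θs : ℕ → ℝ)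
    (hθpos : ∀ k < n, 0 < θ k) (hθspos : ∀ k < n, 0 < θs k)
    (hθmono : ∀ i, ∀ j, i ≤ j → j < n → θ i ≤ θ j)
    (hθsmono : ∀ i, ∀ j, i ≤ j → j < n → θs i ≤ θs j)
    (hsubmaj : ∀ i < n, ∑ k ∈ Finset.Ico i n, θ k ≤ ∑ k ∈ Finset.Ico i n, θs k)
    (u₁ u₂ : ℝ) (hu2 : 0 < u₂) (hu21 : u₂ ≤ u₁) (hu1 : u₁ < 1) :
    ∏ k ∈ Finset.range n, (u₂ ^ θs k * (2 - u₂ ^ θs k)) ^ α ≤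
      ∏ k ∈ Finset.range n, (u₁ ^ θ k * (2 - u₁ ^ θ k)) ^ α := by
  have hu1pos : 0 < u₁ := lt_of_lt_of_le hu2 hu21
  set L := Real.log u₁ with hLdef
  have hL : L < 0 := Real.log_neg hu1pos hu1
  set ψ : ℝ → ℝ := fun t => t * L + Real.log (2 - Real.exp (t * L)) with hψdef
  -- rewrite positive-exponent factors in exponential form
  have hfact : ∀ t : ℝ, 0 < t → (u₁ ^ t * (2 - u₁ ^ t)) ^ α = Real.exp (α * ψ t) := by
    intro t ht
    have hx : u₁ ^ t = Real.exp (t * L) := by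
      rw [Real.rpow_def_of_pos hu1pos, mul_comm]
    have hxpos : 0 < u₁ ^ t := Real.rpow_pos_of_pos hu1pos t
    have hx1 : u₁ ^ t ≤ 1 := Real.rpow_le_one hu1pos.le hu1.le ht.le
    have h2x : 0 < 2 - u₁ ^ t := by linarith
    have hbase : 0 < u₁ ^ t * (2 - u₁ ^ t) := mul_pos hxpos h2x
    rw [Real.rpow_def_of_pos hbase, Real.log_mul (ne_of_gt hxpos) (ne_of_gt h2x)]
    rw [hx, Real.log_exp, mul_comm]
  -- Step A : replace u₂ by u₁
  have stepA : ∏ k ∈ Finset.range n, (u₂ ^ θs k * (2 - u₂ ^ θs k)) ^ α ≤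
      ∏ k ∈ Finset.range n, (u₁ ^ θs k * (2 - u₁ ^ θs k)) ^ α := by
    apply Finset.prod_le_prod
    · intro k hk
      have ht := hθspos k (Finset.mem_range.mp hk)
      have hxpos : 0 < u₂ ^ θs k := Real.rpow_pos_of_pos hu2 _
      have hx1 : u₂ ^ θs k ≤ 1 := Real.rpow_le_one hu2.le (by linarith) ht.le
      exact Real.rpow_nonneg (by nlinarith) α
    · intro k hk
      have ht := hθspos k (Finset.mem_range.mp hk)
      have hxpos : 0 < u₂ ^ θs k := Real.rpow_pos_of_pos hu2 _
      have hx1 : u₂ ^ θs k ≤ 1 := Real.rpow_le_one hu2.le (by linarith) ht.le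
      have hypos : 0 < u₁ ^ θs k := Real.rpow_pos_of_pos hu1pos _
      have hy1 : u₁ ^ θs k ≤ 1 := Real.rpow_le_one hu1pos.le hu1.le ht.le
      have hxy : u₂ ^ θs k ≤ u₁ ^ θs k := Real.rpow_le_rpow hu2.le hu21 ht.le
      apply Real.rpow_le_rpow (by nlinarith) _ hα.le
      nlinarith
  -- Step B : use weak submajorization
  have stepB : ∏ k ∈ Finset.range n, (u₁ ^ θs k * (2 - u₁ ^ θs k)) ^ α ≤
      ∏ k ∈ Finset.range n, (u₁ ^ θ k * (2 - u₁ ^ θ k)) ^ α := by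
    rw [Finset.prod_congr rfl (fun k hk => hfact (θs k) (hθspos k (Finset.mem_range.mp hk))),
        Finset.prod_congr rfl (fun k hk => hfact (θ k) (hθpos k (Finset.mem_range.mp hk))),
        ← Real.exp_sum, ← Real.exp_sum, Real.exp_le_exp, ← Finset.mul_sum, ← Finset.mul_sum]
    apply mul_le_mul_of_nonneg_left _ hα.le
    -- ∑ ψ (θs k) ≤ ∑ ψ (θ k)
    set c : ℕ → ℝ := fun k =>
      -(L * ((2 - 2 * Real.exp (θ k * L)) / (2 - Real.exp (θ k * L)))) with hcdef
    set d : ℕ → ℝ := fun k => θs k - θ k with hddef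
    have hA : ∀ k < n, θ k * L < 0 := fun k hk =>
      mul_neg_of_pos_of_neg (hθpos k hk) hL
    have habel : 0 ≤ ∑ k ∈ Finset.range n, c k * d k := by
      apply abel_nonneg_s11 n c d
      · intro k hk
        have hxA : Real.exp (θ k * L) < 1 := Real.exp_lt_one_iff.mpr (hA k hk)
        have hp := Real.exp_pos (θ k * L)
        have hg : 0 ≤ (2 - 2 * Real.exp (θ k * L)) / (2 - Real.exp (θ k * L)) :=
          div_nonneg (by linarith) (by linarith)
        simp only [hcdef, neg_mul_eq_neg_mul]
        exact mul_nonneg (by linarith) hg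
      · intro i j hij hjn
        have hθij : θ i ≤ θ j := hθmono i j hij hjn
        have hAji : θ j * L ≤ θ i * L := mul_le_mul_of_nonpos_right hθij hL.le
        set x := Real.exp (θ i * L)
        set y := Real.exp (θ j * L)
        have hyx : y ≤ x := Real.exp_le_exp.mpr hAji
        have hx1 : x < 1 := Real.exp_lt_one_iff.mpr (hA i (lt_of_le_of_lt hij hjn))
        have hy1 : y < 1 := Real.exp_lt_one_iff.mpr (hA j hjn)
        have hxp : 0 < x := Real.exp_pos _
        have hyp : 0 < y := Real.exp_pos _
        have hgle : (2 - 2 * x) / (2 - x) ≤ (2 - 2 * y) / (2 - y) := by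
          rw [div_le_div_iff₀ (by linarith) (by linarith)]
          nlinarith
        simp only [hcdef, neg_mul_eq_neg_mul]
        exact mul_le_mul_of_nonneg_left hgle (by linarith)
      · intro i hi
        rw [hddef]
        simp only [Finset.sum_sub_distrib]
        linarith [hsubmaj i hi]
    have htang : ∀ k ∈ Finset.range n, c k * d k ≤ ψ (θ k) - ψ (θs k) := by
      intro k hk
      have hkn := Finset.mem_range.mp hk
      have hAk : θ k * L < 0 := hA k hkn
      have hBk : θs k * L < 0 := mul_neg_of_pos_of_neg (hθspos k hkn) hL
      have h := tangent_aux (θ k * L) (θs k * L) hAk hBk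
      simp only [hψdef, hcdef, hddef]
      nlinarith [h]
    have hsum := Finset.sum_le_sum htang
    rw [Finset.sum_sub_distrib] at hsum
    linarith
  exact le_trans stepA stepB
end
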